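/- arXiv:2010.11100 — 7 statements merged into one kernel-verified Lean document; each statement's English description precedes it below -/
import Mathlib

section
/- Let H be an S_1-free cgh on Ω_n and let u ∈ Ω_n. Then there exists a vertex m ∈ Ω_n with m ≠ u such that every edge of the link graph G_u that does not contain m has exactly one endpoint in each of the two open arcs of Ω_n determined by u and m; equivalently, G_u − m is bipartite with its two parts contained in the two disjoint open arcs determined by u and m. -/
/-- The list of points of `ZMod n` occurs in this clockwise cyclic order:
anchored at the first point, the clockwise arc-distances from it are
positive and strictly increasing. -/
def CWList (n : ℕ) : List (ZMod n) → Prop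
  | [] => True
  | a :: l => ((0 : ℕ) :: l.map fun b => (b - a).val).Chain' (· < ·)

/-- `H` is a 3-uniform (convex geometric) hypergraph on `Ω_n = ZMod n`. -/
def IsCgh (n : ℕ) (H : Finset (Finset (ZMod n))) : Prop :=
  ∀ e ∈ H, e.card = 3

def nabla (n : ℕ) : ℕ :=
  if Odd n then n * (n - 1) * (n + 1) / 24 else n * (n - 2) * (n + 2) / 24

/-- `H` contains a copy of the configuration `S₁`: two triples sharing exactly
the vertex `v`, with the five vertices in clockwise cyclic order `v, a₁, a₂, b₁, b₂`. -/
def HasS1 (n : ℕ) (H : Finset (Finset (ZMod n))) : Prop :=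
  ∃ v a₁ a₂ b₁ b₂ : ZMod n,
    CWList n [v, a₁, a₂, b₁, b₂] ∧
    ({v, a₁, a₂} : Finset (ZMod n)) ∈ H ∧ ({v, b₁, b₂} : Finset (ZMod n)) ∈ H

theorem link_almost_bipartite (n : ℕ) (hn : 3 ≤ n)
    (H : Finset (Finset (ZMod n))) (hcgh : IsCgh n H) (hfree : ¬ HasS1 n H)
    (u : ZMod n) :
    ∃ m : ZMod n, m ≠ u ∧
      ∀ w x : ZMod n, ({u, w, x} : Finset (ZMod n)) ∈ H → w ≠ m → x ≠ m →
        ((CWList n [u, w, m] ∧ CWList n [m, x, u]) ∨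
         (CWList n [m, w, u] ∧ CWList n [u, x, m])) := by
  classical
  haveI : NeZero n := ⟨by omega⟩
  haveI : Fact (1 < n) := ⟨by omega⟩
  set p : ZMod n → ℕ := fun v => (v - u).val with hp
  have hpu : p u = 0 := by simp [hp]
  have hplt : ∀ v, p v < n := fun v => ZMod.val_lt _
  have hppos : ∀ v, v ≠ u → 0 < p v := by
    intro v hv
    rcases Nat.eq_zero_or_pos (p v) with h | h
    · exact absurd (by rwa [hp, ZMod.val_eq_zero, sub_eq_zero] at h) hv
    · exact h
  have hpinj : ∀ v w, p v = p w → v = w := by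
    intro v w h
    have := ZMod.val_injective n h
    exact sub_left_injective this
  have hdist : ∀ w x : ZMod n, ({u,w,x} : Finset (ZMod n)) ∈ H →
      w ≠ u ∧ x ≠ u ∧ w ≠ x := by
    intro w x hwx
    have h3 := hcgh _ hwx
    have key2 : ∀ (s : Finset (ZMod n)) (a b : ZMod n), s ⊆ {a, b} → s.card ≤ 2 := by
      intro s a b h
      exact (Finset.card_le_card h).trans ((Finset.card_insert_le _ _).trans (by simp))
    refine ⟨?_, ?_, ?_⟩ <;> rintro rfl
    · have := key2 {w, w, x} w x (by intro y hy; simp at hy ⊢; tauto)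
      omega
    · have := key2 {x, w, x} x w (by intro y hy; simp at hy ⊢; tauto)
      omega
    · have := key2 {u, w, w} u w (by intro y hy; simp at hy ⊢; tauto)
      omega
  have key : ∀ w x y z : ZMod n, ({u,w,x} : Finset (ZMod n)) ∈ H →
      ({u,y,z} : Finset (ZMod n)) ∈ H →
      0 < p w → p w < p x → p x < p y → p y < p z → False := by
    intro w x y z h1 h2 h0 h01 h12 h23
    apply hfree
    refine ⟨u, w, x, y, z, ?_, h1, h2⟩
    unfold CWList
    simp only [List.Chain', List.map_cons, List.map_nil, List.isChain_cons_cons, List.isChain_singleton, and_true]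
    exact ⟨h0, h01, h12, h23⟩
  have hswap : ∀ w x : ZMod n, ({u,w,x} : Finset (ZMod n)) = {u,x,w} := by
    intro w x
    rw [Finset.pair_comm w x]
  set E : Finset (ZMod n × ZMod n) :=
    Finset.univ.filter (fun q => ({u, q.1, q.2} : Finset (ZMod n)) ∈ H ∧ p q.1 < p q.2) with hE
  have memE : ∀ q : ZMod n × ZMod n,
      q ∈ E ↔ ({u, q.1, q.2} : Finset (ZMod n)) ∈ H ∧ p q.1 < p q.2 := by
    intro q; simp [hE]
  rcases E.eq_empty_or_nonempty with hEe | hEne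
  · -- no edges at u at all
    refine ⟨u + 1, ?_, ?_⟩
    · intro h
      have h1 : (1 : ZMod n) = 0 := by
        have := congrArg (fun z => z - u) h
        simpa using this
      have := congrArg ZMod.val h1
      rw [ZMod.val_one, ZMod.val_zero] at this
      exact one_ne_zero this
    · intro w x hwx hwm hxm
      exfalso
      have hd := hdist w x hwx
      have hne : p w ≠ p x := fun h => hd.2.2 (hpinj _ _ h)
      rcases lt_or_gt_of_ne hne with h | h
      · have : (w, x) ∈ E := (memE _).2 ⟨hwx, h⟩
        rw [hEe] at this
        exact absurd this (Finset.notMem_empty _)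
      · have : (x, w) ∈ E := (memE _).2 ⟨(hswap w x) ▸ hwx, h⟩
        rw [hEe] at this
        exact absurd this (Finset.notMem_empty _)
  · have hBne : (E.image fun q => p q.2).Nonempty := hEne.image _
    set b : ℕ := (E.image fun q => p q.2).min' hBne with hb
    obtain ⟨q0, hq0E, hq0b⟩ := Finset.mem_image.1 ((E.image fun q => p q.2).min'_mem hBne)
    obtain ⟨hq0H, hq0lt⟩ := (memE q0).1 hq0E
    have hq0b' : p q0.2 = b := by rw [hb]; exact hq0b
    have hbn : b < n := by rw [← hq0b']; exact hplt _
    have hb0 : 0 < b := by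
      rw [← hq0b']
      exact lt_of_le_of_lt (Nat.zero_le _) hq0lt
    set m : ZMod n := u + (b : ZMod n) with hm
    have hpm : p m = b := by
      have : m - u = (b : ZMod n) := by rw [hm]; ring
      rw [hp]
      simp only [this]
      exact ZMod.val_cast_of_lt hbn
    have hmu : m ≠ u := by
      intro h
      rw [h, hpu] at hpm
      omega
    have hmin : ∀ q ∈ E, b ≤ p q.2 := fun q hq =>
      Finset.min'_le _ _ (Finset.mem_image_of_mem _ hq)
    have main : ∀ w x : ZMod n, ({u,w,x} : Finset (ZMod n)) ∈ H → w ≠ m → x ≠ m →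
        p w < p x → CWList n [u, w, m] ∧ CWList n [m, x, u] := by
      intro w x hwx hwm hxm hlt
      have hd := hdist w x hwx
      have hwE : (w, x) ∈ E := (memE _).2 ⟨hwx, hlt⟩
      have hxb : b ≤ p x := hmin _ hwE
      have hxne : p x ≠ b := fun h => hxm (hpinj x m (h.trans hpm.symm))
      have hxgt : b < p x := lt_of_le_of_ne hxb (Ne.symm hxne)
      have hwb : p w ≤ b := by
        by_contra hcon
        push_neg at hcon
        have hq0pos : 0 < p q0.1 := hppos _ (hdist _ _ hq0H).1
        exact key q0.1 q0.2 w x hq0H hwx hq0pos hq0lt (by omega : p q0.2 < p w) hlt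
      have hwlt : p w < b := lt_of_le_of_ne hwb
        (fun h => hwm (hpinj w m (h.trans hpm.symm)))
      have hwpos : 0 < p w := hppos _ hd.1
      constructor
      · unfold CWList
        simp only [List.Chain', List.map_cons, List.map_nil, List.isChain_cons_cons, List.isChain_singleton, and_true]
        exact ⟨hwpos, by rw [show (m - u).val = b from hpm]; exact hwlt⟩
      · have h1 : (x - m).val = p x - b := by
          have hxmu : x - m = (x - u) - (m - u) := by ring
          rw [hxmu, ZMod.val_sub (by rw [show (m - u).val = b from hpm]; exact hxb)]
          rw [show (m - u).val = b from hpm]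
        have h2 : (u - m).val = n - b := by
          have huW : u - m = -(m - u) := by ring
          rw [huW, ZMod.neg_val]
          rw [if_neg (by rw [sub_eq_zero]; exact hmu)]
          rw [show (m - u).val = b from hpm]
        unfold CWList
        simp only [List.Chain', List.map_cons, List.map_nil, List.isChain_cons_cons, List.isChain_singleton, and_true]
        have hxn : p x < n := hplt x
        refine ⟨?_, ?_⟩
        · rw [h1]; omega
        · rw [h1, h2]; omega
    refine ⟨m, hmu, ?_⟩
    intro w x hwx hwm hxm
    have hd := hdist w x hwx
    have hne : p w ≠ p x := fun h => hd.2.2 (hpinj _ _ h)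
    rcases lt_or_gt_of_ne hne with h | h
    · exact Or.inl (main w x hwx hwm hxm h)
    · have := main x w ((hswap w x) ▸ hwx) hxm hwm h
      exact Or.inr ⟨this.2, this.1⟩
end

section
/- Every S_1-free cgh H on Ω_n (n ≥ 3) contains a vertex u whose degree satisfies d_H(u) ≤ n²/8 + 3n/2. -/
set_option linter.unusedSectionVars false
set_option maxHeartbeats 1600000

namespace S1aux
variable {n : ℕ} [NeZero n]

lemma cast_val (a : ZMod n) : ((a.val : ZMod n)) = a := ZMod.natCast_rightInverse a

lemma val_sub_wrap {a b : ZMod n} (h : a.val < b.val) :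
    (a - b).val = a.val + n - b.val := by
  have hb := ZMod.val_lt b
  have hlt : a.val + n - b.val < n := by omega
  have : ((a.val + n - b.val : ℕ) : ZMod n) = a - b := by
    have hle : b.val ≤ a.val + n := by omega
    rw [Nat.cast_sub hle, Nat.cast_add, ZMod.natCast_self, add_zero, cast_val, cast_val]
  rw [← this, ZMod.val_cast_of_lt hlt]

lemma val_from_dist {x y : ZMod n} : x.val = ((x - y).val + y.val) % n := by
  conv_lhs => rw [← sub_add_cancel x y]
  exact ZMod.val_add _ _

lemma val_pos_of_ne {x y : ZMod n} (h : x ≠ y) : 0 < (x - y).val := by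
  rcases Nat.eq_zero_or_pos (x - y).val with h0 | h0
  · exact absurd (sub_eq_zero.mp ((ZMod.val_eq_zero _).mp h0)) h
  · exact h0

lemma eq_of_dist_eq {x y u : ZMod n} (h : (x - u).val = (y - u).val) : x = y := by
  have := ZMod.val_injective n h
  exact sub_left_injective this

/-- distance of the far companion -/
def hiD (u : ZMod n) (e : Finset (ZMod n)) : ℕ := (e.erase u).sup fun x => (x - u).val

/-- distance of the near companion -/
def loD (u : ZMod n) (e : Finset (ZMod n)) : ℕ :=
  (∑ x ∈ e.erase u, (x - u).val) - hiD u e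

lemma lohi {u x y : ZMod n} (hxu : x ≠ u) (hyu : y ≠ u) (hxy : x ≠ y)
    (hlt : (x - u).val < (y - u).val) :
    loD u {u, x, y} = (x - u).val ∧ hiD u {u, x, y} = (y - u).val := by
  have her : ({u, x, y} : Finset (ZMod n)).erase u = {x, y} := by
    rw [show ({u, x, y} : Finset (ZMod n)) = insert u {x, y} from rfl]
    exact Finset.erase_insert (by simp [hxu.symm, hyu.symm])
  have hsup : hiD u {u, x, y} = (y - u).val := by
    rw [hiD, her, Finset.sup_insert, Finset.sup_singleton]
    omega
  refine ⟨?_, hsup⟩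
  rw [loD, her, Finset.sum_pair hxy, hsup]
  omega

lemma cross {H : Finset (Finset (ZMod n))} (hfree : ¬ HasS1 n H) (u x₁ x₂ y₁ y₂ : ZMod n)
    (h1 : ({u, x₁, x₂} : Finset (ZMod n)) ∈ H) (h2 : ({u, y₁, y₂} : Finset (ZMod n)) ∈ H)
    (c0 : 0 < (x₁ - u).val) (c1 : (x₁ - u).val < (x₂ - u).val)
    (c2 : (x₂ - u).val < (y₁ - u).val) (c3 : (y₁ - u).val < (y₂ - u).val) : False := by
  refine hfree ⟨u, x₁, x₂, y₁, y₂, ?_, h1, h2⟩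
  show ((0 : ℕ) :: [x₁, x₂, y₁, y₂].map fun b => (b - u).val).Chain' (· < ·)
  simp only [List.Chain', List.map_cons, List.map_nil, List.isChain_cons_cons, List.isChain_singleton, and_true]
  exact ⟨c0, c1, c2, c3⟩

lemma edge_decomp {H : Finset (Finset (ZMod n))} (hcgh : IsCgh n H) {e : Finset (ZMod n)}
    (he : e ∈ H) {u : ZMod n} (hu : u ∈ e) :
    ∃ x y : ZMod n, e = {u, x, y} ∧ 0 < (x - u).val ∧ (x - u).val < (y - u).val ∧
      loD u e = (x - u).val ∧ hiD u e = (y - u).val := by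
  obtain ⟨a, b, c, hab, hac, hbc, rfl⟩ := Finset.card_eq_three.mp (hcgh e he)
  simp only [Finset.mem_insert, Finset.mem_singleton] at hu
  have key : ∀ x y : ZMod n, ({a, b, c} : Finset (ZMod n)) = {u, x, y} → x ≠ u → y ≠ u →
      x ≠ y → ∃ x' y' : ZMod n, ({a,b,c} : Finset (ZMod n)) = {u, x', y'} ∧
      0 < (x' - u).val ∧ (x' - u).val < (y' - u).val ∧
      loD u {a,b,c} = (x' - u).val ∧ hiD u {a,b,c} = (y' - u).val := by
    intro x y hset hxu hyu hxy
    have hne : (x - u).val ≠ (y - u).val := fun h => hxy (eq_of_dist_eq h)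
    rcases lt_or_gt_of_ne hne with h | h
    · obtain ⟨hl, hh⟩ := lohi hxu hyu hxy h
      exact ⟨x, y, hset, val_pos_of_ne hxu, h, by rw [hset]; exact hl,
        by rw [hset]; exact hh⟩
    · obtain ⟨hl, hh⟩ := lohi hyu hxu hxy.symm h
      have hperm : ({u, x, y} : Finset (ZMod n)) = {u, y, x} := by
        exact congrArg (insert u) (Finset.pair_comm x y)
      exact ⟨y, x, hset.trans hperm, val_pos_of_ne hyu, h,
        by rw [hset, hperm]; exact hl, by rw [hset, hperm]; exact hh⟩
  rcases hu with rfl | rfl | rfl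
  · exact key b c rfl (Ne.symm hab) (Ne.symm hac) hbc
  · exact key a c (Finset.insert_comm a u {c}) hab (Ne.symm hbc) hac
  · refine key a b ?_ hac hbc hab
    rw [Finset.pair_comm b u, Finset.insert_comm a u {b}]
lemma arith_case (g m P k : ℕ) (hP : 1 ≤ P) (hPg : P + 2 ≤ g) (hm : 1 ≤ m) (hk : k + 1 ≤ P) :
    4 * ((P - 1 - k) * (m - 1) + (g - P) * m + (k + 1) * (g - P)) ≤ (g + m) ^ 2 := by
  have h1 : k ≤ P - 1 := by omega
  have h2 : 1 ≤ P := hP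
  have h3 : P ≤ g := by omega
  rcases le_or_gt (g - P) (m - 1) with hc | hc
  · zify [h1, h2, h3, hm] at *
    nlinarith [sq_nonneg ((g : ℤ) - m), sq_nonneg ((g : ℤ) + m), sq_nonneg ((g:ℤ) - m - 2)]
  · zify [h1, h2, h3, hm] at *
    nlinarith [sq_nonneg ((g : ℤ) - 2*P - m), sq_nonneg ((g:ℤ) + m)]

lemma grid (g m : ℕ) (hg : 2 ≤ g) (hm : 1 ≤ m)
    (A B : Finset (ℕ × ℕ))
    (hA : ∀ p ∈ A, 1 ≤ p.1 ∧ p.1 < g ∧ g < p.2 ∧ p.2 < g + m)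
    (hB : ∀ q ∈ B, 1 ≤ q.1 ∧ q.1 < q.2 ∧ m < q.2 ∧ q.2 < g + m ∧ q.1 ≠ m)
    (h1 : ∀ p ∈ A, ∀ q ∈ B, q.2 = m + p.1 → q.1 < m → p.2 ≤ q.1 + g)
    (h2 : ∀ p ∈ A, ∀ q ∈ B, m < q.1 → m + p.1 ≠ q.1)
    (h3 : ∀ q ∈ B, ∀ q' ∈ B, m < q.1 → q.1 ≤ q'.2) :
    4 * (A.card + B.card) ≤ (g + m) ^ 2 := by
  classical
  set I : Finset ℕ := Finset.Icc 1 (g - 1) with hI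
  -- fiberwise decomposition of A
  have hAfib : A.card = ∑ z ∈ I, (A.filter fun p => p.1 = z).card := by
    apply Finset.card_eq_sum_card_fiberwise
    intro p hp
    have := hA p hp
    simp only [hI, Finset.mem_coe, Finset.mem_Icc]
    omega
  -- split B into C and D parts
  set Cs : Finset (ℕ × ℕ) := B.filter (fun q => q.1 < m) with hCs
  set D : Finset (ℕ × ℕ) := B.filter (fun q => m < q.1) with hD
  have hBsplit : B.card = Cs.card + D.card := by
    rw [hCs, hD, ← Finset.card_filter_add_card_filter_not (s := B) (p := fun q => q.1 < m)]
    congr 1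
    exact congrArg Finset.card (Finset.filter_congr (fun q hq => by
      have := hB q hq
      constructor
      · intro h; omega
      · intro h; omega))
  have hCsB : ∀ q ∈ Cs, q ∈ B := fun q hq => Finset.mem_of_mem_filter q hq
  have hDB : ∀ q ∈ D, q ∈ B := fun q hq => Finset.mem_of_mem_filter q hq
  have hCfib : Cs.card = ∑ z ∈ I, (Cs.filter fun q => q.2 - m = z).card := by
    apply Finset.card_eq_sum_card_fiberwise
    intro q hq
    have := hB q (hCsB q hq)
    simp only [hI, Finset.mem_coe, Finset.mem_Icc]
    omega
  -- bound on a fiber of A alone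
  have habound : ∀ z : ℕ, (A.filter fun p => p.1 = z).card ≤ m - 1 := by
    intro z
    have hinj : ((A.filter fun p => p.1 = z).image fun p => p.2).card
        = (A.filter fun p => p.1 = z).card := by
      apply Finset.card_image_of_injOn
      intro p hp p' hp' hpp
      simp only [Finset.mem_coe, Finset.mem_filter] at hp hp'
      exact Prod.ext (hp.2.trans hp'.2.symm) hpp
    have hsub : ((A.filter fun p => p.1 = z).image fun p => p.2) ⊆ Finset.Icc (g+1) (g+m-1) := by
      intro b hb
      obtain ⟨p, hp, rfl⟩ := Finset.mem_image.mp hb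
      have := hA p (Finset.mem_of_mem_filter p hp)
      simp only [Finset.mem_Icc]
      omega
    have hle := Finset.card_le_card hsub
    rw [hinj] at hle
    have hc : (Finset.Icc (g+1) (g+m-1)).card = m - 1 := by rw [Nat.card_Icc]; omega
    omega
  -- chain bound on each fiber
  have hchain : ∀ z ∈ I, (A.filter fun p => p.1 = z).card
      + (Cs.filter fun q => q.2 - m = z).card ≤ m := by
    intro z hz
    by_cases hCz : (Cs.filter fun q => q.2 - m = z).Nonempty
    · -- images
      have hinjC : ((Cs.filter fun q => q.2 - m = z).image fun q => q.1).card
          = (Cs.filter fun q => q.2 - m = z).card := by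
        apply Finset.card_image_of_injOn
        intro q hq q' hq' hqq
        simp only [Finset.mem_coe, Finset.mem_filter] at hq hq'
        have hqB := hB q (hCsB q hq.1)
        have hqB' := hB q' (hCsB q' hq'.1)
        have : q.2 = q'.2 := by omega
        exact Prod.ext hqq this
      have hinjA : ((A.filter fun p => p.1 = z).image fun p => p.2).card
          = (A.filter fun p => p.1 = z).card := by
        apply Finset.card_image_of_injOn
        intro p hp p' hp' hpp
        simp only [Finset.mem_coe, Finset.mem_filter] at hp hp'
        exact Prod.ext (hp.2.trans hp'.2.symm) hpp
      set SC := (Cs.filter fun q => q.2 - m = z).image fun q => q.1 with hSC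
      have hSCne : SC.Nonempty := hCz.image _
      set l₀ := SC.min' hSCne with hl₀
      obtain ⟨q₀, hq₀, hq₀1⟩ := Finset.mem_image.mp (SC.min'_mem hSCne)
      simp only [Finset.mem_filter] at hq₀
      have hq₀B := hB q₀ (hCsB q₀ hq₀.1)
      have hq₀C : q₀.1 < m := (Finset.mem_filter.mp hq₀.1).2
      have hq₀2 : q₀.2 = m + z := by omega
      -- A-fiber is bounded by l₀
      have hsubA : ((A.filter fun p => p.1 = z).image fun p => p.2)
          ⊆ Finset.Icc (g+1) (l₀ + g) := by
        intro b hb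
        obtain ⟨p, hp, rfl⟩ := Finset.mem_image.mp hb
        have hpA := Finset.mem_of_mem_filter p hp
        have hpz : p.1 = z := (Finset.mem_filter.mp hp).2
        have hAp := hA p hpA
        have hle : p.2 ≤ q₀.1 + g := h1 p hpA q₀ (hCsB q₀ hq₀.1) (by omega) hq₀C
        simp only [Finset.mem_Icc]
        omega
      have hsubC : SC ⊆ Finset.Icc l₀ (m - 1) := by
        intro l hl
        have hmin := SC.min'_le l hl
        obtain ⟨q, hq, rfl⟩ := Finset.mem_image.mp hl
        simp only [Finset.mem_filter] at hq
        have := (Finset.mem_filter.mp hq.1).2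
        simp only [Finset.mem_Icc]
        omega
      have cA := Finset.card_le_card hsubA
      have cC := Finset.card_le_card hsubC
      rw [hinjA] at cA
      rw [hSC] at hinjC
      rw [hinjC] at cC
      have hl₀m : l₀ ≤ m - 1 := by
        have : l₀ ∈ Finset.Icc l₀ (m-1) := hsubC (SC.min'_mem hSCne)
        simp only [Finset.mem_Icc] at this
        omega
      have h1' : l₀ + g ≥ g + 1 → True := fun _ => trivial
      rw [Nat.card_Icc] at cA cC
      omega
    · have : (Cs.filter fun q => q.2 - m = z).card = 0 := by
        rw [Finset.not_nonempty_iff_eq_empty] at hCz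
        simp [hCz]
      have := habound z
      omega
  rcases Finset.eq_empty_or_nonempty D with hDe | hDne
  · -- no C₂ part at all
    have hsum : ∑ z ∈ I, ((A.filter fun p => p.1 = z).card
        + (Cs.filter fun q => q.2 - m = z).card) ≤ I.card * m := by
      calc ∑ z ∈ I, ((A.filter fun p => p.1 = z).card + (Cs.filter fun q => q.2 - m = z).card)
          ≤ ∑ _z ∈ I, m := Finset.sum_le_sum hchain
        _ = I.card * m := by rw [Finset.sum_const, smul_eq_mul]
    have hIcard : I.card = g - 1 := by rw [hI, Nat.card_Icc]; omega
    have hIm : I.card * m = (g - 1) * m := by rw [hIcard]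
    have htot : A.card + B.card ≤ (g - 1) * m := by
      rw [hAfib, hBsplit, hCfib, hDe]
      simp only [Finset.card_empty, add_zero]
      rw [← Finset.sum_add_distrib]
      omega
    have : 4 * ((g-1) * m) ≤ (g + m)^2 := by
      zify [show 1 ≤ g by omega]
      nlinarith [sq_nonneg ((g:ℤ) - m)]
    omega
  · -- with C₂ part
    set KL : Finset ℕ := D.image (fun q => q.1) with hKL
    have hKLne : KL.Nonempty := hDne.image _
    set P' := KL.max' hKLne with hP'
    obtain ⟨qh, hqhD, hqh1⟩ := Finset.mem_image.mp (KL.max'_mem hKLne)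
    have hqhB : qh ∈ B := hDB qh hqhD
    have hqhm : m < qh.1 := (Finset.mem_filter.mp hqhD).2
    have hmP' : m < P' := by omega
    have hP'ub : P' ≤ g + m - 2 := by
      have := hB qh hqhB
      omega
    have hP'max : ∀ q ∈ D, q.1 ≤ P' := fun q hq => KL.le_max' _ (Finset.mem_image_of_mem _ hq)
    have hdead : ∀ q ∈ B, P' ≤ q.2 := by
      intro q hq
      have := h3 qh hqhB q hq hqhm
      omega
    set P := P' - m with hPdef
    have hP1 : 1 ≤ P := by omega
    have hPg : P + 2 ≤ g := by omega
    have hPP' : P' = m + P := by omega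
    -- dead fibers: no C-elements below P
    have hczero : ∀ z, z < P → (Cs.filter fun q => q.2 - m = z) = ∅ := by
      intro z hzP
      apply Finset.eq_empty_of_forall_notMem
      intro q hq
      simp only [Finset.mem_filter] at hq
      have hqB := hB q (hCsB q hq.1)
      have := hdead q (hCsB q hq.1)
      omega
    -- kill lemma
    have hkill : ∀ z, (m + z) ∈ KL → (A.filter fun p => p.1 = z) = ∅ := by
      intro z hz
      obtain ⟨q, hqD, hq1⟩ := Finset.mem_image.mp hz
      apply Finset.eq_empty_of_forall_notMem
      intro p hp
      simp only [Finset.mem_filter] at hp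
      have hqm : m < q.1 := (Finset.mem_filter.mp hqD).2
      have := h2 p hp.1 q (hDB q hqD) hqm
      omega
    -- D count
    have hDcount : D.card ≤ KL.card * (g - P) := by
      have hfib : D.card = ∑ l ∈ KL, (D.filter fun q => q.1 = l).card :=
        Finset.card_eq_sum_card_fiberwise (fun q hq => Finset.mem_image_of_mem _ hq)
      have hper : ∀ l ∈ KL, (D.filter fun q => q.1 = l).card ≤ g - P := by
        intro l _
        have hinj : ((D.filter fun q => q.1 = l).image fun q => q.2).card
            = (D.filter fun q => q.1 = l).card := by
          apply Finset.card_image_of_injOn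
          intro q hq q' hq' hqq
          simp only [Finset.mem_coe, Finset.mem_filter] at hq hq'
          exact Prod.ext (hq.2.trans hq'.2.symm) hqq
        have hsub : ((D.filter fun q => q.1 = l).image fun q => q.2)
            ⊆ Finset.Icc P' (g + m - 1) := by
          intro b hb
          obtain ⟨q, hq, rfl⟩ := Finset.mem_image.mp hb
          have hqB := hB q (hDB q (Finset.mem_of_mem_filter q hq))
          have := hdead q (hDB q (Finset.mem_of_mem_filter q hq))
          simp only [Finset.mem_Icc]
          omega
        have := Finset.card_le_card hsub
        rw [hinj] at this
        rw [Nat.card_Icc] at this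
        omega
      calc D.card = ∑ l ∈ KL, (D.filter fun q => q.1 = l).card := hfib
        _ ≤ ∑ _l ∈ KL, (g - P) := Finset.sum_le_sum hper
        _ = KL.card * (g - P) := by rw [Finset.sum_const, smul_eq_mul]
    -- killed set
    set killed : Finset ℕ := (Finset.Icc 1 (P-1)).filter (fun z => m + z ∈ KL) with hkilled
    set k := killed.card with hk
    have hkP : k + 1 ≤ P := by
      have h' : killed ⊆ Finset.Icc 1 (P-1) := Finset.filter_subset _ _
      have := Finset.card_le_card h'
      rw [Nat.card_Icc] at this
      omega
    have hKLcard : KL.card ≤ k + 1 := by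
      have hsub : KL ⊆ insert P' (killed.image fun z => m + z) := by
        intro l hl
        obtain ⟨q, hqD, hq1⟩ := Finset.mem_image.mp hl
        have hqm : m < q.1 := (Finset.mem_filter.mp hqD).2
        have hlP' : l ≤ P' := by have := hP'max q hqD; omega
        rcases eq_or_lt_of_le hlP' with h | h
        · rw [h]; exact Finset.mem_insert_self _ _
        · apply Finset.mem_insert_of_mem
          apply Finset.mem_image.mpr
          refine ⟨l - m, ?_, by omega⟩
          rw [hkilled]
          simp only [Finset.mem_filter, Finset.mem_Icc]
          refine ⟨⟨by omega, by omega⟩, ?_⟩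
          rw [show m + (l - m) = l by omega]
          exact hl
      calc KL.card ≤ (insert P' (killed.image fun z => m + z)).card := Finset.card_le_card hsub
        _ ≤ (killed.image fun z => m + z).card + 1 := Finset.card_insert_le _ _
        _ ≤ k + 1 := by have := Finset.card_image_le (s := killed) (f := fun z => m + z); omega
    -- split the index interval
    have hIsplit : I = Finset.Icc 1 (P-1) ∪ Finset.Icc P (g-1) := by
      ext z
      simp only [hI, Finset.mem_Icc, Finset.mem_union]
      omega
    have hdisj : Disjoint (Finset.Icc 1 (P-1)) (Finset.Icc P (g-1)) := by
      rw [Finset.disjoint_left]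
      intro z hz hz'
      simp only [Finset.mem_Icc] at hz hz'
      omega
    have hsum1 : ∑ z ∈ Finset.Icc 1 (P-1), ((A.filter fun p => p.1 = z).card
        + (Cs.filter fun q => q.2 - m = z).card) ≤ (P - 1 - k) * (m - 1) := by
      have hzero : ∀ z ∈ killed, ((A.filter fun p => p.1 = z).card
          + (Cs.filter fun q => q.2 - m = z).card) = 0 := by
        intro z hz
        rw [hkilled] at hz
        simp only [Finset.mem_filter, Finset.mem_Icc] at hz
        rw [hkill z hz.2, hczero z (by omega)]
        simp
      have hsubk : killed ⊆ Finset.Icc 1 (P-1) := Finset.filter_subset _ _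
      rw [← Finset.sum_sdiff hsubk]
      have hz2 : ∑ z ∈ killed, ((A.filter fun p => p.1 = z).card
          + (Cs.filter fun q => q.2 - m = z).card) = 0 := Finset.sum_eq_zero hzero
      rw [hz2, add_zero]
      have hbound : ∀ z ∈ Finset.Icc 1 (P-1) \ killed, ((A.filter fun p => p.1 = z).card
          + (Cs.filter fun q => q.2 - m = z).card) ≤ m - 1 := by
        intro z hz
        simp only [Finset.mem_sdiff, Finset.mem_Icc] at hz
        rw [hczero z (by omega)]
        simp only [Finset.card_empty, add_zero]
        exact habound z
      calc ∑ z ∈ Finset.Icc 1 (P-1) \ killed, ((A.filter fun p => p.1 = z).card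
            + (Cs.filter fun q => q.2 - m = z).card)
          ≤ ∑ _z ∈ Finset.Icc 1 (P-1) \ killed, (m - 1) := Finset.sum_le_sum hbound
        _ = (Finset.Icc 1 (P-1) \ killed).card * (m - 1) := by
            rw [Finset.sum_const, smul_eq_mul]
        _ = (P - 1 - k) * (m - 1) := by
            rw [Finset.card_sdiff_of_subset hsubk, Nat.card_Icc]
            have : P - 1 + 1 - 1 - k = P - 1 - k := by omega
            rw [this]
    have hsum2 : ∑ z ∈ Finset.Icc P (g-1), ((A.filter fun p => p.1 = z).card
        + (Cs.filter fun q => q.2 - m = z).card) ≤ (g - P) * m := by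
      calc ∑ z ∈ Finset.Icc P (g-1), ((A.filter fun p => p.1 = z).card
            + (Cs.filter fun q => q.2 - m = z).card)
          ≤ ∑ _z ∈ Finset.Icc P (g-1), m := by
            apply Finset.sum_le_sum
            intro z hz
            apply hchain
            simp only [Finset.mem_Icc] at hz
            simp only [hI, Finset.mem_Icc]
            omega
        _ = (Finset.Icc P (g-1)).card * m := by rw [Finset.sum_const, smul_eq_mul]
        _ = (g - P) * m := by
            rw [Nat.card_Icc]
            have : g - 1 + 1 - P = g - P := by omega
            rw [this]
    have htot : A.card + B.card ≤ (P - 1 - k) * (m - 1) + (g - P) * m + (k + 1) * (g - P) := by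
      have e1 : A.card + Cs.card = ∑ z ∈ I, ((A.filter fun p => p.1 = z).card
          + (Cs.filter fun q => q.2 - m = z).card) := by
        rw [hAfib, hCfib, Finset.sum_add_distrib]
      have e2 : ∑ z ∈ I, ((A.filter fun p => p.1 = z).card
          + (Cs.filter fun q => q.2 - m = z).card)
          ≤ (P - 1 - k) * (m - 1) + (g - P) * m := by
        rw [hIsplit, Finset.sum_union hdisj]
        omega
      have e3 : D.card ≤ (k + 1) * (g - P) := by
        calc D.card ≤ KL.card * (g - P) := hDcount
          _ ≤ (k + 1) * (g - P) := Nat.mul_le_mul_right _ hKLcard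
      omega
    calc 4 * (A.card + B.card)
        ≤ 4 * ((P - 1 - k) * (m - 1) + (g - P) * m + (k + 1) * (g - P)) := by omega
      _ ≤ (g + m)^2 := arith_case g m P k hP1 hPg hm hkP

lemma rot3 (a b c : ZMod n) : ({a, b, c} : Finset (ZMod n)) = {b, c, a} := by
  ext t
  simp only [Finset.mem_insert, Finset.mem_singleton]
  tauto

lemma sw23 (a b c : ZMod n) : ({a, b, c} : Finset (ZMod n)) = {a, c, b} :=
  congrArg (insert a) (Finset.pair_comm b c)

end S1aux

section Main
open S1aux

theorem S1_free_min_degree (n : ℕ) (hn : 3 ≤ n)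
    (H : Finset (Finset (ZMod n))) (hcgh : IsCgh n H) (hfree : ¬ HasS1 n H) :
    ∃ u : ZMod n,
      ((H.filter fun e => u ∈ e).card : ℝ) ≤ n ^ 2 / 8 + 3 * n / 2 := by
  haveI : NeZero n := ⟨by omega⟩
  classical
  suffices hkey : ∃ u : ZMod n, 8 * (H.filter fun e => u ∈ e).card ≤ n ^ 2 + 12 * n by
    obtain ⟨u, hu⟩ := hkey
    refine ⟨u, ?_⟩
    have h8 : (8 : ℝ) * ((H.filter fun e => u ∈ e).card : ℝ) ≤ (n : ℝ) ^ 2 + 12 * n := by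
      exact_mod_cast hu
    linarith
  by_cases hVempty : (H.filter fun e => (0 : ZMod n) ∈ e).Nonempty
  case neg =>
    refine ⟨0, ?_⟩
    rw [Finset.not_nonempty_iff_eq_empty] at hVempty
    rw [hVempty]
    simp
  -- the minimum far-distance over edges at 0
  set Hv := H.filter (fun e => (0 : ZMod n) ∈ e) with hHv
  have hVim : (Hv.image (hiD 0)).Nonempty := hVempty.image _
  set g := (Hv.image (hiD 0)).min' hVim with hgdef
  obtain ⟨e₁, he₁v, he₁g⟩ := Finset.mem_image.mp ((Hv.image (hiD 0)).min'_mem hVim)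
  have he₁H : e₁ ∈ H := Finset.mem_of_mem_filter _ he₁v
  have he₁0 : (0 : ZMod n) ∈ e₁ := (Finset.mem_filter.mp he₁v).2
  obtain ⟨A₁, W, he₁eq, hα0, hαg, he₁lo, he₁hi⟩ := edge_decomp hcgh he₁H he₁0
  simp only [sub_zero] at hα0 hαg he₁lo he₁hi
  -- notation
  have hWg : W.val = g := by rw [← he₁hi, he₁g]
  have hgn : g < n := hWg ▸ ZMod.val_lt W
  have hg2 : 2 ≤ g := by
    have := hα0; have := hαg; omega
  set m := n - g with hmdef
  have hm1 : 1 ≤ m := by omega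
  have hgm : g + m = n := by omega
  have hmin : ∀ e ∈ Hv, g ≤ hiD 0 e := fun e he =>
    Finset.min'_le _ _ (Finset.mem_image_of_mem _ he)
  have hW0 : W ≠ 0 := by
    intro h
    rw [h, ZMod.val_zero] at hWg
    omega
  have hA₁W : (A₁ - W).val = m + A₁.val := by
    rw [val_sub_wrap (by omega : A₁.val < W.val), hWg]
    omega
  have h0W : ((0 : ZMod n) - W).val = m := by
    rw [val_sub_wrap (by rw [ZMod.val_zero]; omega), hWg, ZMod.val_zero]
    omega
  have he₁mem : ({(0 : ZMod n), A₁, W} : Finset (ZMod n)) ∈ H := he₁eq ▸ he₁H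
  have he₁mem' : ({W, (0 : ZMod n), A₁} : Finset (ZMod n)) ∈ H := by
    rw [rot3]; exact he₁mem
  -- structure of X-edges
  have hXfact : ∀ e ∈ H, (0 : ZMod n) ∈ e → W ∉ e →
      ∃ X Y : ZMod n, e = {0, X, Y} ∧ loD 0 e = X.val ∧ hiD 0 e = Y.val ∧
        1 ≤ X.val ∧ X.val < g ∧ g < Y.val ∧ Y.val < n := by
    intro e heH he0 heW
    obtain ⟨X, Y, heq, hx0, hxy, hlo, hhi⟩ := edge_decomp hcgh heH he0
    simp only [sub_zero] at hx0 hxy hlo hhi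
    have heHv : e ∈ Hv := Finset.mem_filter.mpr ⟨heH, he0⟩
    have hY : g ≤ Y.val := by rw [← hhi]; exact hmin e heHv
    have hXe : X ∈ e := by rw [heq]; simp
    have hYe : Y ∈ e := by rw [heq]; simp
    have hXW : X ≠ W := fun h => heW (h ▸ hXe)
    have hYW : Y ≠ W := fun h => heW (h ▸ hYe)
    have hYg : g < Y.val := by
      rcases lt_or_eq_of_le hY with h | h
      · exact h
      · exact absurd (ZMod.val_injective n (by omega : Y.val = W.val)) hYW
    have hXg : X.val < g := by
      by_contra hc
      push_neg at hc
      have hXg' : g < X.val := by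
        rcases lt_or_eq_of_le hc with h | h
        · exact h
        · exact absurd (ZMod.val_injective n (by omega : X.val = W.val)) hXW
      exact absurd (cross hfree 0 A₁ W X Y he₁mem (heq ▸ heH)
        (by simp only [sub_zero]; omega) (by simp only [sub_zero]; omega)
        (by simp only [sub_zero]; omega) (by simp only [sub_zero]; omega)) (by simp)
    exact ⟨X, Y, heq, hlo, hhi, by omega, hXg, hYg, ZMod.val_lt Y⟩
  -- structure of Y-edges
  have hYfact : ∀ e ∈ H, W ∈ e → (0 : ZMod n) ∉ e →
      ∃ C Dv : ZMod n, e = {W, C, Dv} ∧ loD W e = (C - W).val ∧ hiD W e = (Dv - W).val ∧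
        1 ≤ (C - W).val ∧ (C - W).val < (Dv - W).val ∧ m < (Dv - W).val ∧
        (Dv - W).val < n ∧ (C - W).val ≠ m := by
    intro e heH heW he0
    obtain ⟨C, Dv, heq, hc0, hcd, hlo, hhi⟩ := edge_decomp hcgh heH heW
    have hCe : C ∈ e := by rw [heq]; simp
    have hDe : Dv ∈ e := by rw [heq]; simp
    have hCne : (C - W).val ≠ m := by
      intro h
      have : C - W = 0 - W := ZMod.val_injective n (by rw [h, h0W])
      have : C = (0 : ZMod n) := by
        have := sub_left_injective this
        exact this
      exact he0 (this ▸ hCe)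
    have hDne : (Dv - W).val ≠ m := by
      intro h
      have : Dv - W = 0 - W := ZMod.val_injective n (by rw [h, h0W])
      have : Dv = (0 : ZMod n) := sub_left_injective this
      exact he0 (this ▸ hDe)
    have hDm : m < (Dv - W).val := by
      by_contra hcon
      push_neg at hcon
      have hd : (Dv - W).val < m := by omega
      exact absurd (cross hfree W C Dv 0 A₁ (heq ▸ heH) he₁mem'
        hc0 hcd (by rw [h0W]; omega) (by rw [h0W, hA₁W]; omega)) (by simp)
    exact ⟨C, Dv, heq, hlo, hhi, hc0, hcd, hDm, ZMod.val_lt _, hCne⟩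
  -- coded sets
  set Xed := H.filter (fun e => (0 : ZMod n) ∈ e ∧ W ∉ e) with hXed
  set Yed := H.filter (fun e => W ∈ e ∧ (0 : ZMod n) ∉ e) with hYed
  set Aset := Xed.image (fun e => (loD 0 e, hiD 0 e)) with hAset
  set Bset := Yed.image (fun e => (loD W e, hiD W e)) with hBset
  have hXmem : ∀ e ∈ Xed, e ∈ H ∧ (0 : ZMod n) ∈ e ∧ W ∉ e := by
    intro e he
    have := Finset.mem_filter.mp he
    exact ⟨this.1, this.2.1, this.2.2⟩
  have hYmem : ∀ e ∈ Yed, e ∈ H ∧ W ∈ e ∧ (0 : ZMod n) ∉ e := by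
    intro e he
    have := Finset.mem_filter.mp he
    exact ⟨this.1, this.2.1, this.2.2⟩
  have hcardA : Aset.card = Xed.card := by
    apply Finset.card_image_of_injOn
    intro e he e' he' hee
    obtain ⟨hH1, h01, hW1⟩ := hXmem e he
    obtain ⟨hH2, h02, hW2⟩ := hXmem e' he'
    obtain ⟨X, Y, heq, hlo, hhi, _, _, _, _⟩ := hXfact e hH1 h01 hW1
    obtain ⟨X', Y', heq', hlo', hhi', _, _, _, _⟩ := hXfact e' hH2 h02 hW2
    have h1 : X.val = X'.val := by
      have := congrArg Prod.fst hee
      simp only at this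
      rw [hlo, hlo'] at this
      exact this
    have h2 : Y.val = Y'.val := by
      have := congrArg Prod.snd hee
      simp only at this
      rw [hhi, hhi'] at this
      exact this
    rw [heq, heq', ZMod.val_injective n h1, ZMod.val_injective n h2]
  have hcardB : Bset.card = Yed.card := by
    apply Finset.card_image_of_injOn
    intro e he e' he' hee
    obtain ⟨hH1, hW1, h01⟩ := hYmem e he
    obtain ⟨hH2, hW2, h02⟩ := hYmem e' he'
    obtain ⟨C, Dv, heq, hlo, hhi, _, _, _, _, _⟩ := hYfact e hH1 hW1 h01
    obtain ⟨C', Dv', heq', hlo', hhi', _, _, _, _, _⟩ := hYfact e' hH2 hW2 h02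
    have h1 : C = C' := by
      have h := congrArg Prod.fst hee
      simp only at h
      rw [hlo, hlo'] at h
      exact sub_left_injective (ZMod.val_injective n h)
    have h2 : Dv = Dv' := by
      have h := congrArg Prod.snd hee
      simp only at h
      rw [hhi, hhi'] at h
      exact sub_left_injective (ZMod.val_injective n h)
    rw [heq, heq', h1, h2]
  -- grid hypotheses
  have hgA : ∀ p ∈ Aset, 1 ≤ p.1 ∧ p.1 < g ∧ g < p.2 ∧ p.2 < g + m := by
    intro p hp
    obtain ⟨e, he, rfl⟩ := Finset.mem_image.mp hp
    obtain ⟨hH1, h01, hW1⟩ := hXmem e he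
    obtain ⟨X, Y, heq, hlo, hhi, hf1, hf2, hf3, hf4⟩ := hXfact e hH1 h01 hW1
    have e1 : (loD 0 e, hiD 0 e).1 = X.val := hlo
    have e2 : (loD 0 e, hiD 0 e).2 = Y.val := hhi
    rw [e1, e2]
    exact ⟨hf1, hf2, hf3, by omega⟩
  have hgB : ∀ q ∈ Bset, 1 ≤ q.1 ∧ q.1 < q.2 ∧ m < q.2 ∧ q.2 < g + m ∧ q.1 ≠ m := by
    intro q hq
    obtain ⟨e, he, rfl⟩ := Finset.mem_image.mp hq
    obtain ⟨hH1, hW1, h01⟩ := hYmem e he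
    obtain ⟨C, Dv, heq, hlo, hhi, hf1, hf2, hf3, hf4, hf5⟩ := hYfact e hH1 hW1 h01
    have e1 : (loD W e, hiD W e).1 = (C - W).val := hlo
    have e2 : (loD W e, hiD W e).2 = (Dv - W).val := hhi
    rw [e1, e2]
    exact ⟨hf1, hf2, hf3, by omega, hf5⟩
  have hh1 : ∀ p ∈ Aset, ∀ q ∈ Bset, q.2 = m + p.1 → q.1 < m → p.2 ≤ q.1 + g := by
    intro p hp q hq hq2 hq1
    obtain ⟨eA, heA, rfl⟩ := Finset.mem_image.mp hp
    obtain ⟨eB, heB, rfl⟩ := Finset.mem_image.mp hq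
    obtain ⟨hHA, h0A, hWA⟩ := hXmem eA heA
    obtain ⟨hHB, hWB, h0B⟩ := hYmem eB heB
    obtain ⟨Zv, Bv, heqA, hloA, hhiA, hz1, hzg, hgb, hbn⟩ := hXfact eA hHA h0A hWA
    obtain ⟨Cv, Dv, heqB, hloB, hhiB, hl1, hlh, hmh, hhn, hlm⟩ := hYfact eB hHB hWB h0B
    have hq2' : (Dv - W).val = m + Zv.val := by
      have h' : (loD W eB, hiD W eB).2 = m + (loD 0 eA, hiD 0 eA).1 := hq2
      rw [hhiB, hloA] at h'
      exact h'
    have hq1' : (Cv - W).val < m := by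
      have h' : (loD W eB, hiD W eB).1 < m := hq1
      rw [hloB] at h'
      exact h'
    have hzn : Zv.val < n := ZMod.val_lt Zv
    have hDvval : Dv.val = Zv.val := by
      have hv := val_from_dist (x := Dv) (y := W)
      rw [hWg, hq2'] at hv
      have hmzg : m + Zv.val + g = n + Zv.val := by omega
      rw [hmzg, Nat.add_mod_left, Nat.mod_eq_of_lt hzn] at hv
      exact hv
    have hDZ : Dv = Zv := ZMod.val_injective n hDvval
    have hCvval : Cv.val = (Cv - W).val + g := by
      have hv := val_from_dist (x := Cv) (y := W)
      rw [hWg, Nat.mod_eq_of_lt (by omega)] at hv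
      exact hv
    by_contra hcon
    push_neg at hcon
    have hcon' : (Cv - W).val + g < Bv.val := by
      have h' : ((loD W eB, hiD W eB).1 + g < (loD 0 eA, hiD 0 eA).2) := hcon
      rw [hloB, hhiA] at h'
      exact h'
    have hmemB : ({Zv, W, Cv} : Finset (ZMod n)) ∈ H := by
      have h' : ({Zv, W, Cv} : Finset (ZMod n)) = eB := by
        rw [heqB, hDZ]; exact rot3 Zv W Cv
      rw [h']; exact hHB
    have hmemA : ({Zv, Bv, (0 : ZMod n)} : Finset (ZMod n)) ∈ H := by
      have h' : ({Zv, Bv, (0 : ZMod n)} : Finset (ZMod n)) = eA := by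
        rw [heqA]; exact (rot3 0 Zv Bv).symm
      rw [h']; exact hHA
    have d1 : (W - Zv).val = g - Zv.val := by
      rw [ZMod.val_sub (by omega : Zv.val ≤ W.val), hWg]
    have d2 : (Cv - Zv).val = (Cv - W).val + g - Zv.val := by
      rw [ZMod.val_sub (by omega : Zv.val ≤ Cv.val), hCvval]
    have d3 : (Bv - Zv).val = Bv.val - Zv.val :=
      ZMod.val_sub (by omega : Zv.val ≤ Bv.val)
    have d4 : ((0 : ZMod n) - Zv).val = n - Zv.val := by
      rw [val_sub_wrap (by rw [ZMod.val_zero]; omega), ZMod.val_zero]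
      omega
    exact absurd (cross hfree Zv W Cv Bv 0 hmemB hmemA
      (by rw [d1]; omega) (by rw [d1, d2]; omega)
      (by rw [d2, d3]; omega) (by rw [d3, d4]; omega)) (by simp)
  have hh2 : ∀ p ∈ Aset, ∀ q ∈ Bset, m < q.1 → m + p.1 ≠ q.1 := by
    intro p hp q hq hqm
    obtain ⟨eA, heA, rfl⟩ := Finset.mem_image.mp hp
    obtain ⟨eB, heB, rfl⟩ := Finset.mem_image.mp hq
    obtain ⟨hHA, h0A, hWA⟩ := hXmem eA heA
    obtain ⟨hHB, hWB, h0B⟩ := hYmem eB heB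
    obtain ⟨Zv, Bv, heqA, hloA, hhiA, hz1, hzg, hgb, hbn⟩ := hXfact eA hHA h0A hWA
    obtain ⟨Cv, Dv, heqB, hloB, hhiB, hl1, hlh, hmh, hhn, hlm⟩ := hYfact eB hHB hWB h0B
    intro hcon
    have hcon' : m + Zv.val = (Cv - W).val := by
      have h' : m + (loD 0 eA, hiD 0 eA).1 = (loD W eB, hiD W eB).1 := hcon
      rw [hloA, hloB] at h'
      exact h'
    have hzn : Zv.val < n := ZMod.val_lt Zv
    have hCvval : Cv.val = Zv.val := by
      have hv := val_from_dist (x := Cv) (y := W)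
      rw [hWg, ← hcon'] at hv
      have hmzg : m + Zv.val + g = n + Zv.val := by omega
      rw [hmzg, Nat.add_mod_left, Nat.mod_eq_of_lt hzn] at hv
      exact hv
    have hCZ : Cv = Zv := ZMod.val_injective n hCvval
    have hDvval : Dv.val = (Dv - W).val - m := by
      have hv := val_from_dist (x := Dv) (y := W)
      rw [hWg] at hv
      have hsplit : (Dv - W).val + g = n + ((Dv - W).val - m) := by omega
      rw [hsplit, Nat.add_mod_left, Nat.mod_eq_of_lt (by omega)] at hv
      exact hv
    have hDgt : Zv.val < Dv.val := by omega
    have hDlt : Dv.val < g := by omega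
    have hmemB : ({Zv, Dv, W} : Finset (ZMod n)) ∈ H := by
      have h' : ({Zv, Dv, W} : Finset (ZMod n)) = eB := by
        rw [heqB, hCZ]; exact (rot3 W Zv Dv).symm
      rw [h']; exact hHB
    have hmemA : ({Zv, Bv, (0 : ZMod n)} : Finset (ZMod n)) ∈ H := by
      have h' : ({Zv, Bv, (0 : ZMod n)} : Finset (ZMod n)) = eA := by
        rw [heqA]; exact (rot3 0 Zv Bv).symm
      rw [h']; exact hHA
    have d1 : (Dv - Zv).val = Dv.val - Zv.val :=
      ZMod.val_sub (by omega : Zv.val ≤ Dv.val)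
    have d2 : (W - Zv).val = g - Zv.val := by
      rw [ZMod.val_sub (by omega : Zv.val ≤ W.val), hWg]
    have d3 : (Bv - Zv).val = Bv.val - Zv.val :=
      ZMod.val_sub (by omega : Zv.val ≤ Bv.val)
    have d4 : ((0 : ZMod n) - Zv).val = n - Zv.val := by
      rw [val_sub_wrap (by rw [ZMod.val_zero]; omega), ZMod.val_zero]
      omega
    exact absurd (cross hfree Zv Dv W Bv 0 hmemB hmemA
      (by rw [d1]; omega) (by rw [d1, d2]; omega)
      (by rw [d2, d3]; omega) (by rw [d3, d4]; omega)) (by simp)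
  have hh3 : ∀ q ∈ Bset, ∀ q' ∈ Bset, m < q.1 → q.1 ≤ q'.2 := by
    intro q hq q' hq' hqm
    obtain ⟨eB, heB, rfl⟩ := Finset.mem_image.mp hq
    obtain ⟨eC, heC, rfl⟩ := Finset.mem_image.mp hq'
    obtain ⟨hHB, hWB, h0B⟩ := hYmem eB heB
    obtain ⟨hHC, hWC, h0C⟩ := hYmem eC heC
    obtain ⟨Cv, Dv, heqB, hloB, hhiB, hl1, hlh, hmh, hhn, hlm⟩ := hYfact eB hHB hWB h0B
    obtain ⟨Cv', Dv', heqC, hloC, hhiC, hl1', hlh', hmh', hhn', hlm'⟩ := hYfact eC hHC hWC h0C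
    by_contra hcon
    push_neg at hcon
    have hcon' : (Dv' - W).val < (Cv - W).val := by
      have h' : (loD W eC, hiD W eC).2 < (loD W eB, hiD W eB).1 := hcon
      rw [hhiC, hloB] at h'
      exact h'
    have hmemC : ({W, Cv', Dv'} : Finset (ZMod n)) ∈ H := heqC ▸ hHC
    have hmemB : ({W, Cv, Dv} : Finset (ZMod n)) ∈ H := heqB ▸ hHB
    exact absurd (cross hfree W Cv' Dv' Cv Dv hmemC hmemB
      (by omega) (by omega) (by omega) (by omega)) (by simp)
  have hgrid := grid g m hg2 hm1 Aset Bset hgA hgB hh1 hh2 hh3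
  rw [hgm, hcardA, hcardB] at hgrid
  -- codegree count
  set Zed := H.filter (fun e => (0 : ZMod n) ∈ e ∧ W ∈ e) with hZed
  have hZstr : ∀ e ∈ Zed, ∃ T, e = {0, W, T} ∧ (∑ x ∈ e, x) = W + T := by
    intro e he
    have heH : e ∈ H := Finset.mem_of_mem_filter _ he
    have he0 : (0 : ZMod n) ∈ e := (Finset.mem_filter.mp he).2.1
    have heW : W ∈ e := (Finset.mem_filter.mp he).2.2
    obtain ⟨X, Y, heq, hx0, hxy, _, _⟩ := edge_decomp hcgh heH he0
    simp only [sub_zero] at hx0 hxy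
    have hX0 : X ≠ 0 := by
      intro h; rw [h, ZMod.val_zero] at hx0; omega
    have hY0 : Y ≠ 0 := by
      intro h; rw [h, ZMod.val_zero] at hxy; omega
    have hXY : X ≠ Y := by
      intro h; rw [h] at hxy; omega
    have hsum : (∑ x ∈ e, x) = X + Y := by
      rw [heq, Finset.sum_insert (by
        simp only [Finset.mem_insert, Finset.mem_singleton]
        push_neg
        exact ⟨Ne.symm hX0, Ne.symm hY0⟩), Finset.sum_pair hXY, zero_add]
    have hWe : W ∈ ({(0 : ZMod n), X, Y} : Finset (ZMod n)) := heq ▸ heW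
    simp only [Finset.mem_insert, Finset.mem_singleton] at hWe
    rcases hWe with h | h | h
    · exact absurd h hW0
    · exact ⟨Y, by rw [heq, h], by rw [hsum, h]⟩
    · refine ⟨X, ?_, by rw [hsum, h, add_comm]⟩
      rw [heq, ← h, sw23]
  have hZcard : Zed.card ≤ n := by
    have hinj : Set.InjOn (fun e => ∑ x ∈ e, x) (Zed : Set (Finset (ZMod n))) := by
      intro e he e' he' hee
      obtain ⟨T, heq, hsum⟩ := hZstr e he
      obtain ⟨T', heq', hsum'⟩ := hZstr e' he'
      simp only at hee
      rw [hsum, hsum'] at hee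
      rw [heq, heq', add_left_cancel hee]
    have hle := Finset.card_le_card_of_injOn (fun e => ∑ x ∈ e, x)
      (fun e _ => Finset.mem_univ _) hinj
    rw [Finset.card_univ, ZMod.card n] at hle
    exact hle
  -- degree partitions
  have hd0 : (H.filter fun e => (0 : ZMod n) ∈ e).card = Xed.card + Zed.card := by
    have hpart := Finset.card_filter_add_card_filter_not
      (s := H.filter fun e => (0 : ZMod n) ∈ e) (p := fun e => W ∈ e)
    rw [Finset.filter_filter, Finset.filter_filter] at hpart
    have e1 : H.filter (fun e => (0 : ZMod n) ∈ e ∧ W ∈ e) = Zed := rfl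
    have e2 : H.filter (fun e => (0 : ZMod n) ∈ e ∧ W ∉ e) = Xed := rfl
    rw [e1, e2] at hpart
    omega
  have hdW : (H.filter fun e => W ∈ e).card = Yed.card + Zed.card := by
    have hpart := Finset.card_filter_add_card_filter_not
      (s := H.filter fun e => W ∈ e) (p := fun e => (0 : ZMod n) ∈ e)
    rw [Finset.filter_filter, Finset.filter_filter] at hpart
    have e1 : H.filter (fun e => W ∈ e ∧ (0 : ZMod n) ∈ e) = Zed := by
      ext e
      simp only [hZed, Finset.mem_filter]
      tauto
    have e2 : H.filter (fun e => W ∈ e ∧ (0 : ZMod n) ∉ e) = Yed := rfl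
    rw [e1, e2] at hpart
    omega
  rcases le_total ((H.filter fun e => (0 : ZMod n) ∈ e).card)
      ((H.filter fun e => W ∈ e).card) with hle | hle
  · refine ⟨0, ?_⟩
    nlinarith [hgrid, hZcard, hd0, hdW, hle]
  · refine ⟨W, ?_⟩
    nlinarith [hgrid, hZcard, hd0, hdW, hle]

end Main
end

section
/- Let n ≥ 6, let H be an M_2-free cgh on Ω_n, and let u and v be cyclically consecutive vertices of Ω_n (v = u+1). Then the common link graph G_{u,v} = {{w,x} : {u,w,x} ∈ H and {v,w,x} ∈ H} contains no two disjoint edges; consequently |G_{u,v}| ≤ n − 3. -/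
/-- `H` contains a copy of the configuration `M₂`: two vertex-disjoint triples
whose six vertices occur in clockwise cyclic order `a₁, a₂, b₁, a₃, b₂, b₃`. -/
def HasM2 (n : ℕ) (H : Finset (Finset (ZMod n))) : Prop :=
  ∃ a₁ a₂ a₃ b₁ b₂ b₃ : ZMod n,
    CWList n [a₁, a₂, b₁, a₃, b₂, b₃] ∧
    ({a₁, a₂, a₃} : Finset (ZMod n)) ∈ H ∧ ({b₁, b₂, b₃} : Finset (ZMod n)) ∈ H

lemma card3 {α : Type*} [DecidableEq α] {a b c : α} (h : ({a,b,c} : Finset α).card = 3) :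
    a ≠ b ∧ a ≠ c ∧ b ≠ c := by
  have h2 : ∀ (p q : α), ({p,q} : Finset α).card ≤ 2 :=
    fun p q => (Finset.card_insert_le _ _).trans (by simp)
  refine ⟨?_, ?_, ?_⟩ <;> rintro rfl
  · have hsub : ({a,a,c} : Finset α) ⊆ {a,c} := by intro t; simp; try tauto
    have := (Finset.card_le_card hsub).trans (h2 a c); omega
  · have hsub : ({a,b,a} : Finset α) ⊆ {a,b} := by intro t; simp; try tauto
    have := (Finset.card_le_card hsub).trans (h2 a b); omega
  · have hsub : ({a,b,b} : Finset α) ⊆ {a,b} := by intro t; simp; try tauto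
    have := (Finset.card_le_card hsub).trans (h2 a b); omega

lemma cw6 {n : ℕ} [NeZero n] {a b c d e f : ZMod n} {k1 k2 k3 k4 k5 : ℕ}
    (h1 : b - a = (k1 : ZMod n)) (h2 : c - a = (k2 : ZMod n)) (h3 : d - a = (k3 : ZMod n))
    (h4 : e - a = (k4 : ZMod n)) (h5 : f - a = (k5 : ZMod n))
    (o1 : 0 < k1) (o2 : k1 < k2) (o3 : k2 < k3) (o4 : k3 < k4) (o5 : k4 < k5) (o6 : k5 < n) :
    CWList n [a, b, c, d, e, f] := by
  simp only [CWList, List.map_cons, List.map_nil, h1, h2, h3, h4, h5]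
  rw [ZMod.val_cast_of_lt (show k1 < n by omega), ZMod.val_cast_of_lt (show k2 < n by omega),
    ZMod.val_cast_of_lt (show k3 < n by omega), ZMod.val_cast_of_lt (show k4 < n by omega),
    ZMod.val_cast_of_lt o6]
  simp [List.Chain', List.isChain_cons_cons]
  omega

lemma triEq {n : ℕ} (a b c : ZMod n) : ({a, b, c} : Finset (ZMod n)) = {b, c, a} := by
  ext t; simp; tauto

lemma case_sep {n : ℕ} [NeZero n] {H : Finset (Finset (ZMod n))} {u p1 p2 p3 p4 : ZMod n}
    {d1 d2 d3 d4 : ℕ}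
    (hp1 : p1 = u + 1 + (d1 : ZMod n)) (hp2 : p2 = u + 1 + (d2 : ZMod n))
    (hp3 : p3 = u + 1 + (d3 : ZMod n)) (hp4 : p4 = u + 1 + (d4 : ZMod n))
    (o1 : 0 < d1) (o2 : d1 < d2) (o3 : d2 < d3) (o4 : d3 < d4) (o5 : d4 < n - 1)
    (hA : ({u, p1, p2} : Finset (ZMod n)) ∈ H)
    (hB : ({u + 1, p3, p4} : Finset (ZMod n)) ∈ H) : HasM2 n H := by
  have hn : 6 ≤ n := by omega
  refine ⟨p3, p4, u + 1, u, p1, p2, ?_, ?_, hA⟩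
  · refine cw6 (k1 := d4 - d3) (k2 := n - 1 - d3) (k3 := n - d3) (k4 := n + d1 - d3)
      (k5 := n + d2 - d3) ?_ ?_ ?_ ?_ ?_ (by omega) (by omega) (by omega) (by omega)
      (by omega) (by omega)
    · rw [hp4, hp3, Nat.cast_sub (by omega)]; ring
    · rw [hp3, show (n - 1 - d3 : ℕ) = n - (1 + d3) from by omega,
        Nat.cast_sub (by omega), Nat.cast_add, ZMod.natCast_self]
      push_cast; ring
    · rw [hp3, Nat.cast_sub (by omega), ZMod.natCast_self]; ring
    · rw [hp1, hp3, Nat.cast_sub (by omega), Nat.cast_add, ZMod.natCast_self]; ring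
    · rw [hp2, hp3, Nat.cast_sub (by omega), Nat.cast_add, ZMod.natCast_self]; ring
  · rw [triEq, triEq]; exact hB

lemma case_alt {n : ℕ} [NeZero n] {H : Finset (Finset (ZMod n))} {u p1 p2 p3 p4 : ZMod n}
    {d1 d2 d3 d4 : ℕ}
    (hp1 : p1 = u + 1 + (d1 : ZMod n)) (hp2 : p2 = u + 1 + (d2 : ZMod n))
    (hp3 : p3 = u + 1 + (d3 : ZMod n)) (hp4 : p4 = u + 1 + (d4 : ZMod n))
    (o1 : 0 < d1) (o2 : d1 < d2) (o3 : d2 < d3) (o4 : d3 < d4) (o5 : d4 < n - 1)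
    (hA : ({u + 1, p1, p3} : Finset (ZMod n)) ∈ H)
    (hB : ({u, p2, p4} : Finset (ZMod n)) ∈ H) : HasM2 n H := by
  have hn : 6 ≤ n := by omega
  refine ⟨u + 1, p1, p3, p2, p4, u, ?_, hA, ?_⟩
  · refine cw6 (k1 := d1) (k2 := d2) (k3 := d3) (k4 := d4) (k5 := n - 1)
      ?_ ?_ ?_ ?_ ?_ o1 o2 o3 o4 (by omega) (by omega)
    · rw [hp1]; ring
    · rw [hp2]; ring
    · rw [hp3]; ring
    · rw [hp4]; ring
    · rw [Nat.cast_sub (by omega), ZMod.natCast_self]; push_cast; ring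
  · rw [triEq, triEq]; exact hB

lemma case_nest {n : ℕ} [NeZero n] {H : Finset (Finset (ZMod n))} {u p1 p2 p3 p4 : ZMod n}
    {d1 d2 d3 d4 : ℕ}
    (hp1 : p1 = u + 1 + (d1 : ZMod n)) (hp2 : p2 = u + 1 + (d2 : ZMod n))
    (hp3 : p3 = u + 1 + (d3 : ZMod n)) (hp4 : p4 = u + 1 + (d4 : ZMod n))
    (o1 : 0 < d1) (o2 : d1 < d2) (o3 : d2 < d3) (o4 : d3 < d4) (o5 : d4 < n - 1)
    (hA : ({u, p1, p4} : Finset (ZMod n)) ∈ H)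
    (hB : ({u + 1, p2, p3} : Finset (ZMod n)) ∈ H) : HasM2 n H := by
  have hn : 6 ≤ n := by omega
  refine ⟨p4, u, p1, u + 1, p2, p3, ?_, ?_, hB⟩
  · refine cw6 (k1 := n - 1 - d4) (k2 := n - d4) (k3 := n + d1 - d4) (k4 := n + d2 - d4)
      (k5 := n + d3 - d4) ?_ ?_ ?_ ?_ ?_ (by omega) (by omega) (by omega) (by omega)
      (by omega) (by omega)
    · rw [hp4, show (n - 1 - d4 : ℕ) = n - (1 + d4) from by omega,
        Nat.cast_sub (by omega), Nat.cast_add, ZMod.natCast_self]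
      push_cast; ring
    · rw [hp4, Nat.cast_sub (by omega), ZMod.natCast_self]; ring
    · rw [hp1, hp4, Nat.cast_sub (by omega), Nat.cast_add, ZMod.natCast_self]; ring
    · rw [hp2, hp4, Nat.cast_sub (by omega), Nat.cast_add, ZMod.natCast_self]; ring
    · rw [hp3, hp4, Nat.cast_sub (by omega), Nat.cast_add, ZMod.natCast_self]; ring
  · rw [triEq]; exact hA

lemma mem_swap {n : ℕ} {H : Finset (Finset (ZMod n))} {a b c : ZMod n}
    (h : ({a, b, c} : Finset (ZMod n)) ∈ H) : ({a, c, b} : Finset (ZMod n)) ∈ H := by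
  have : ({a, c, b} : Finset (ZMod n)) = {a, b, c} := by ext t; simp; tauto
  rw [this]; exact h

lemma part1core {n : ℕ} [NeZero n] {H : Finset (Finset (ZMod n))} {u w x y z : ZMod n}
    (hwu : ({u, w, x} : Finset (ZMod n)) ∈ H) (hwv : ({u + 1, w, x} : Finset (ZMod n)) ∈ H)
    (hyu : ({u, y, z} : Finset (ZMod n)) ∈ H) (hyv : ({u + 1, y, z} : Finset (ZMod n)) ∈ H)
    (bw1 : 0 < (w - (u + 1)).val) (bz2 : (z - (u + 1)).val < n - 1)
    (bx2 : (x - (u + 1)).val < n - 1)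
    (owx : (w - (u + 1)).val < (x - (u + 1)).val)
    (oyz : (y - (u + 1)).val < (z - (u + 1)).val)
    (owy : (w - (u + 1)).val < (y - (u + 1)).val)
    (nxy : (x - (u + 1)).val ≠ (y - (u + 1)).val)
    (nxz : (x - (u + 1)).val ≠ (z - (u + 1)).val) : HasM2 n H := by
  have hrec : ∀ p : ZMod n, p = u + 1 + (((p - (u + 1)).val : ℕ) : ZMod n) := by
    intro p; rw [ZMod.natCast_val, ZMod.cast_id]; ring
  rcases nxy.lt_or_gt with h1 | h1
  · exact case_sep (hrec w) (hrec x) (hrec y) (hrec z) bw1 owx h1 oyz bz2 hwu hyv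
  · rcases nxz.lt_or_gt with h2 | h2
    · exact case_alt (hrec w) (hrec y) (hrec x) (hrec z) bw1 owy h1 h2 bz2 hwv hyu
    · exact case_nest (hrec w) (hrec y) (hrec z) (hrec x) bw1 owy oyz h2 bx2 hwu hyv

lemma link_inter (n : ℕ) (hn : 6 ≤ n)
    (H : Finset (Finset (ZMod n))) (hcgh : IsCgh n H) (hfree : ¬ HasM2 n H)
    (u : ZMod n) :
    ∀ w x y z : ZMod n, w ≠ x → y ≠ z →
      ({u, w, x} : Finset (ZMod n)) ∈ H → ({u + 1, w, x} : Finset (ZMod n)) ∈ H →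
      ({u, y, z} : Finset (ZMod n)) ∈ H → ({u + 1, y, z} : Finset (ZMod n)) ∈ H →
      ¬ Disjoint ({w, x} : Finset (ZMod n)) ({y, z} : Finset (ZMod n)) := by
  haveI : NeZero n := ⟨by omega⟩
  intro w x y z hwx hyz h1 h2 h3 h4 hd
  apply hfree
  obtain ⟨huw, hux, -⟩ := card3 (hcgh _ h1)
  obtain ⟨hvw, hvx, -⟩ := card3 (hcgh _ h2)
  obtain ⟨huy, huz, -⟩ := card3 (hcgh _ h3)
  obtain ⟨hvy, hvz, -⟩ := card3 (hcgh _ h4)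
  have hwy : w ≠ y := fun h => Finset.disjoint_left.mp hd (show w ∈ ({w,x}:Finset (ZMod n)) by simp) (show w ∈ ({y,z}:Finset (ZMod n)) by simp [h])
  have hwz : w ≠ z := fun h => Finset.disjoint_left.mp hd (show w ∈ ({w,x}:Finset (ZMod n)) by simp) (show w ∈ ({y,z}:Finset (ZMod n)) by simp [h])
  have hxy : x ≠ y := fun h => Finset.disjoint_left.mp hd (show x ∈ ({w,x}:Finset (ZMod n)) by simp) (show x ∈ ({y,z}:Finset (ZMod n)) by simp [h])
  have hxz : x ≠ z := fun h => Finset.disjoint_left.mp hd (show x ∈ ({w,x}:Finset (ZMod n)) by simp) (show x ∈ ({y,z}:Finset (ZMod n)) by simp [h])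
  have hvalpos : ∀ p : ZMod n, u + 1 ≠ p → 0 < (p - (u + 1)).val := by
    intro p hp
    have hne : p - (u + 1) ≠ 0 := sub_ne_zero.mpr (Ne.symm hp)
    exact Nat.pos_of_ne_zero fun h0 => hne ((ZMod.val_eq_zero _).mp h0)
  have hvaltop : ∀ p : ZMod n, u ≠ p → (p - (u + 1)).val < n - 1 := by
    intro p hp
    have hlt := ZMod.val_lt (p - (u + 1))
    by_contra hc
    have hval : (p - (u + 1)).val = n - 1 := by omega
    have e2 : u - (u + 1) = ((n - 1 : ℕ) : ZMod n) := by
      rw [Nat.cast_sub (by omega : 1 ≤ n), ZMod.natCast_self]; push_cast; ring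
    have e3 : p - (u + 1) = ((n - 1 : ℕ) : ZMod n) := by
      rw [← hval, ZMod.natCast_val, ZMod.cast_id]
    exact hp (sub_left_inj.mp (e3.trans e2.symm)).symm
  have hinj : ∀ p q : ZMod n, p ≠ q → (p - (u + 1)).val ≠ (q - (u + 1)).val := by
    intro p q hpq hval
    exact hpq (sub_left_inj.mp (ZMod.val_injective n hval))
  rcases (hinj w x hwx).lt_or_gt with owx | owx
  · rcases (hinj y z hyz).lt_or_gt with oyz | oyz
    · rcases (hinj w y hwy).lt_or_gt with owy | owy
      · exact part1core h1 h2 h3 h4 (hvalpos w hvw) (hvaltop z huz) (hvaltop x hux)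
          owx oyz owy (hinj x y hxy) (hinj x z hxz)
      · exact part1core h3 h4 h1 h2 (hvalpos y hvy) (hvaltop x hux) (hvaltop z huz)
          oyz owx owy (hinj z w hwz.symm) (hinj z x hxz.symm)
    · rcases (hinj w z hwz).lt_or_gt with owz | owz
      · exact part1core h1 h2 (mem_swap h3) (mem_swap h4) (hvalpos w hvw) (hvaltop y huy)
          (hvaltop x hux) owx oyz owz (hinj x z hxz) (hinj x y hxy)
      · exact part1core (mem_swap h3) (mem_swap h4) h1 h2 (hvalpos z hvz) (hvaltop x hux)
          (hvaltop y huy) oyz owx owz (hinj y w hwy.symm) (hinj y x hxy.symm)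
  · rcases (hinj y z hyz).lt_or_gt with oyz | oyz
    · rcases (hinj x y hxy).lt_or_gt with oxy | oxy
      · exact part1core (mem_swap h1) (mem_swap h2) h3 h4 (hvalpos x hvx) (hvaltop z huz)
          (hvaltop w huw) owx oyz oxy (hinj w y hwy) (hinj w z hwz)
      · exact part1core h3 h4 (mem_swap h1) (mem_swap h2) (hvalpos y hvy) (hvaltop w huw)
          (hvaltop z huz) oyz owx oxy (hinj z x hxz.symm) (hinj z w hwz.symm)
    · rcases (hinj x z hxz).lt_or_gt with oxz | oxz
      · exact part1core (mem_swap h1) (mem_swap h2) (mem_swap h3) (mem_swap h4)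
          (hvalpos x hvx) (hvaltop y huy) (hvaltop w huw) owx oyz oxz
          (hinj w z hwz) (hinj w y hwy)
      · exact part1core (mem_swap h3) (mem_swap h4) (mem_swap h1) (mem_swap h2)
          (hvalpos z hvz) (hvaltop w huw) (hvaltop y huy) oyz owx oxz
          (hinj y x hxy.symm) (hinj y w hwy.symm)

lemma pair_other {α : Type*} [DecidableEq α] {y z t : α} (hyz : y ≠ z)
    (ht : t ∈ ({y, z} : Finset α)) : ∃ s, ({y, z} : Finset α) = {t, s} ∧ s ≠ t := by
  simp only [Finset.mem_insert, Finset.mem_singleton] at ht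
  rcases ht with rfl | rfl
  · exact ⟨z, rfl, hyz.symm⟩
  · exact ⟨y, Finset.pair_comm y t, hyz⟩

lemma pair_eq_of {α : Type*} [DecidableEq α] {p : Finset α} (hp : p.card = 2) {s t : α}
    (hs : s ∈ p) (ht : t ∈ p) (hst : s ≠ t) : p = {s, t} := by
  refine (Finset.eq_of_subset_of_card_le ?_ ?_).symm
  · intro r hr
    simp only [Finset.mem_insert, Finset.mem_singleton] at hr
    rcases hr with rfl | rfl
    exacts [hs, ht]
  · rw [hp, Finset.card_pair hst]

lemma pair_other' {α : Type*} [DecidableEq α] {p : Finset α} (hp : p.card = 2) {t : α}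
    (ht : t ∈ p) : ∃ s, p = {t, s} ∧ s ≠ t := by
  obtain ⟨y, z, hyz, rfl⟩ := Finset.card_eq_two.mp hp
  exact pair_other hyz ht

lemma link_card (n : ℕ) (hn : 6 ≤ n)
    (H : Finset (Finset (ZMod n))) (hcgh : IsCgh n H) (hfree : ¬ HasM2 n H)
    (u : ZMod n) :
    {p : Finset (ZMod n) | ∃ w x : ZMod n, w ≠ x ∧ p = {w, x} ∧
        ({u, w, x} : Finset (ZMod n)) ∈ H ∧
        ({u + 1, w, x} : Finset (ZMod n)) ∈ H}.ncard ≤ n - 3 := by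
  haveI : NeZero n := ⟨by omega⟩
  set S : Set (Finset (ZMod n)) := {p : Finset (ZMod n) | ∃ w x : ZMod n, w ≠ x ∧ p = {w, x} ∧
      ({u, w, x} : Finset (ZMod n)) ∈ H ∧ ({u + 1, w, x} : Finset (ZMod n)) ∈ H} with hS
  have hmeet : ∀ p ∈ S, ∀ q ∈ S, ¬ Disjoint p q := by
    rintro p ⟨w, x, hwx, rfl, h1, h2⟩ q ⟨y, z, hyz, rfl, h3, h4⟩
    exact link_inter n hn H hcgh hfree u w x y z hwx hyz h1 h2 h3 h4
  have havoid : ∀ p ∈ S, ∀ t ∈ p, t ≠ u ∧ t ≠ u + 1 := by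
    rintro p ⟨w, x, hwx, rfl, h1, h2⟩ t ht
    obtain ⟨huw, hux, -⟩ := card3 (hcgh _ h1)
    obtain ⟨hvw, hvx, -⟩ := card3 (hcgh _ h2)
    simp only [Finset.mem_insert, Finset.mem_singleton] at ht
    rcases ht with rfl | rfl
    exacts [⟨huw.symm, hvw.symm⟩, ⟨hux.symm, hvx.symm⟩]
  have hcard2 : ∀ p ∈ S, p.card = 2 := by
    rintro p ⟨w, x, hwx, rfl, -, -⟩
    exact Finset.card_pair hwx
  rcases Set.eq_empty_or_nonempty S with hSe | ⟨e0, he0⟩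
  · rw [hSe]; simp
  by_cases hcom : ∃ c, ∀ p ∈ S, c ∈ p
  · obtain ⟨c, hc⟩ := hcom
    obtain ⟨hcu, hcv⟩ := havoid e0 he0 c (hc e0 he0)
    have huv : u ≠ u + 1 := by
      haveI : Fact (1 < n) := ⟨by omega⟩
      intro h
      have h01 : (0 : ZMod n) = 1 := by
        have h' : u + 0 = u + 1 := by rw [add_zero]; exact h
        exact add_left_cancel h'
      have := congrArg ZMod.val h01
      rw [ZMod.val_zero, ZMod.val_one] at this
      omega
    set Tf : Finset (ZMod n) := Finset.univ \ {u, u + 1, c} with hTf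
    have hsub : S ⊆ ↑(Tf.image fun q => ({c, q} : Finset (ZMod n))) := by
      rintro p hp
      obtain ⟨w, x, hwx, rfl, h1, h2⟩ := hp
      have hcp := hc _ ⟨w, x, hwx, rfl, h1, h2⟩
      simp only [Finset.coe_image, Set.mem_image, Finset.mem_coe]
      obtain ⟨q, hq, hqc⟩ := pair_other hwx hcp
      refine ⟨q, ?_, hq.symm⟩
      have hqmem : q ∈ ({w, x} : Finset (ZMod n)) := by rw [hq]; simp
      obtain ⟨hq1, hq2⟩ := havoid _ ⟨w, x, hwx, rfl, h1, h2⟩ q hqmem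
      simp [hTf, hq1, hq2, hqc]
    have hTcard : Tf.card = n - 3 := by
      rw [hTf, Finset.card_sdiff_of_subset (Finset.subset_univ _), Finset.card_univ, ZMod.card]
      have : ({u, u + 1, c} : Finset (ZMod n)).card = 3 := by
        rw [Finset.card_insert_of_notMem (by simp [huv, hcu.symm]),
          Finset.card_pair (fun h => hcv h.symm)]
      rw [this]
    calc S.ncard ≤ (Tf.image fun q => ({c, q} : Finset (ZMod n))).card := by
          rw [← Set.ncard_coe_finset]
          exact Set.ncard_le_ncard hsub (Finset.finite_toSet _)
      _ ≤ Tf.card := Finset.card_image_le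
      _ = n - 3 := hTcard
  · push_neg at hcom
    have he0' := he0
    obtain ⟨a, b, hab, he0eq, -, -⟩ := he0'
    subst he0eq
    obtain ⟨e2, he2, ha2⟩ := hcom a
    obtain ⟨t, ht0, ht2⟩ := Finset.not_disjoint_iff.mp (hmeet _ he0 e2 he2)
    have hb2 : b ∈ e2 := by
      simp only [Finset.mem_insert, Finset.mem_singleton] at ht0
      rcases ht0 with rfl | rfl
      · exact absurd ht2 ha2
      · exact ht2
    obtain ⟨c, he2eq, hcb⟩ := pair_other' (hcard2 _ he2) hb2
    have hca : c ≠ a := by rintro rfl; exact ha2 (by rw [he2eq]; simp)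
    obtain ⟨e3, he3, hb3⟩ := hcom b
    have ha3 : a ∈ e3 := by
      obtain ⟨t', ht0', ht3'⟩ := Finset.not_disjoint_iff.mp (hmeet _ he0 e3 he3)
      simp only [Finset.mem_insert, Finset.mem_singleton] at ht0'
      rcases ht0' with rfl | rfl
      · exact ht3'
      · exact absurd ht3' hb3
    have hc3 : c ∈ e3 := by
      obtain ⟨t', ht2', ht3'⟩ := Finset.not_disjoint_iff.mp (hmeet _ he2 e3 he3)
      rw [he2eq] at ht2'
      simp only [Finset.mem_insert, Finset.mem_singleton] at ht2'
      rcases ht2' with rfl | rfl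
      · exact absurd ht3' hb3
      · exact ht3'
    have he3eq : e3 = {a, c} := pair_eq_of (hcard2 _ he3) ha3 hc3 hca.symm
    have hsub : S ⊆ ({({a, b}), {b, c}, {a, c}} : Set (Finset (ZMod n))) := by
      intro p hp
      have hpc := hcard2 _ hp
      obtain ⟨t1, hm1, h1⟩ := Finset.not_disjoint_iff.mp (hmeet _ hp _ he0)
      obtain ⟨t2, hm2, h2⟩ := Finset.not_disjoint_iff.mp (hmeet _ hp _ he2)
      obtain ⟨t3, hm3, h3⟩ := Finset.not_disjoint_iff.mp (hmeet _ hp _ he3)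
      rw [he2eq] at h2
      rw [he3eq] at h3
      simp only [Finset.mem_insert, Finset.mem_singleton] at h1 h2 h3
      simp only [Set.mem_insert_iff, Set.mem_singleton_iff]
      by_cases hap : a ∈ p
      · rcases h2 with rfl | rfl
        · exact Or.inl (pair_eq_of hpc hap hm2 hab)
        · exact Or.inr (Or.inr (pair_eq_of hpc hap hm2 hca.symm))
      · have hbp : b ∈ p := by
          rcases h1 with rfl | rfl
          · exact absurd hm1 hap
          · exact hm1
        have hcp : c ∈ p := by
          rcases h3 with rfl | rfl
          · exact absurd hm3 hap
          · exact hm3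
        exact Or.inr (Or.inl (pair_eq_of hpc hbp hcp hcb.symm))
    have h3' : ({({a, b}), {b, c}, {a, c}} : Set (Finset (ZMod n))).ncard ≤ 3 := by
      have l1 := Set.ncard_insert_le ({a, b} : Finset (ZMod n))
        ({({b, c}), {a, c}} : Set (Finset (ZMod n)))
      have l2 := Set.ncard_insert_le ({b, c} : Finset (ZMod n))
        ({({a, c})} : Set (Finset (ZMod n)))
      have l3 : ({({a, c})} : Set (Finset (ZMod n))).ncard = 1 := Set.ncard_singleton _
      omega
    calc S.ncard ≤ ({({a, b}), {b, c}, {a, c}} : Set (Finset (ZMod n))).ncard :=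
          Set.ncard_le_ncard hsub (Set.toFinite _)
      _ ≤ 3 := h3'
      _ ≤ n - 3 := by omega

theorem M2_common_link (n : ℕ) (hn : 6 ≤ n)
    (H : Finset (Finset (ZMod n))) (hcgh : IsCgh n H) (hfree : ¬ HasM2 n H)
    (u : ZMod n) :
    (∀ w x y z : ZMod n, w ≠ x → y ≠ z →
      ({u, w, x} : Finset (ZMod n)) ∈ H → ({u + 1, w, x} : Finset (ZMod n)) ∈ H →
      ({u, y, z} : Finset (ZMod n)) ∈ H → ({u + 1, y, z} : Finset (ZMod n)) ∈ H →
      ¬ Disjoint ({w, x} : Finset (ZMod n)) ({y, z} : Finset (ZMod n))) ∧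
    {p : Finset (ZMod n) | ∃ w x : ZMod n, w ≠ x ∧ p = {w, x} ∧
        ({u, w, x} : Finset (ZMod n)) ∈ H ∧
        ({u + 1, w, x} : Finset (ZMod n)) ∈ H}.ncard ≤ n - 3 :=
  ⟨link_inter n hn H hcgh hfree u, link_card n hn H hcgh hfree u⟩
end

section
/- Let n ≥ 8 and let H be a maximal M_2-free cgh on Ω_n, i.e., H is M_2-free and for every triple e ∉ H the family H ∪ {e} contains a copy of M_2. Then there exists an index i such that the pair {v_i, v_{i+1}} of cyclically consecutive vertices has degree at most three in H, i.e., at most three triples of H contain both v_i and v_{i+1}. -/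
namespace M2Aux

/-- A finset contained in three elements has cardinality at most 3. -/
lemma card_le_three {α : Type*} [DecidableEq α] (a b c : α) (S : Finset α)
    (h : ∀ x ∈ S, x = a ∨ x = b ∨ x = c) : S.card ≤ 3 := by
  have hsub : S ⊆ {a, b, c} := by
    intro x hx
    rcases h x hx with h' | h' | h' <;> simp [h']
  calc S.card ≤ ({a, b, c} : Finset α).card := Finset.card_le_card hsub
    _ ≤ 3 := by
        refine le_trans (Finset.card_insert_le _ _) ?_
        refine Nat.succ_le_succ ?_
        refine le_trans (Finset.card_insert_le _ _) ?_
        simp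

/-- The fundamental "forbidden pattern" lemma: two triples based on the pairs
`{i, i+1}` and `{j, j+1}` with apexes `x`, resp. `y`, such that the clockwise
order is  `i, i+1, y, x, j, j+1`  would form the configuration `M₂`. -/
lemma key {n : ℕ} (hn : 8 ≤ n) (H : Finset (Finset (ZMod n))) (hfree : ¬ HasM2 n H)
    (i j x y : ZMod n)
    (hA : ({i, i + 1, x} : Finset (ZMod n)) ∈ H)
    (hB : ({j, j + 1, y} : Finset (ZMod n)) ∈ H)
    (h1 : 2 ≤ (y - i).val) (h2 : (y - i).val < (x - i).val)
    (h3 : (x - i).val < (j - i).val) (h4 : (j - i).val ≤ n - 2) : False := by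
  haveI : NeZero n := ⟨by omega⟩
  haveI : Fact (1 < n) := ⟨by omega⟩
  apply hfree
  refine ⟨i, i + 1, x, y, j, j + 1, ?_, hA, ?_⟩
  · show ((0 : ℕ) :: ([i + 1, y, x, j, j + 1].map fun b => (b - i).val)).Chain' (· < ·)
    have e1 : (i + 1 - i) = (1 : ZMod n) := by ring
    have e2 : (j + 1 - i) = (j - i) + 1 := by ring
    have v1 : ((1 : ZMod n)).val = 1 := ZMod.val_one n
    have v2 : ((j - i) + 1).val = (j - i).val + 1 := by
      have := ZMod.val_add_of_lt (a := j - i) (b := 1) (by rw [v1]; omega)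
      rw [this, v1]
    simp only [List.Chain', List.map_cons, List.map_nil, e1, e2, v1, v2, List.isChain_cons_cons,
      List.isChain_singleton, and_true]
    refine ⟨by omega, by omega, h2, h3, by omega⟩
  · have : ({y, j, j + 1} : Finset (ZMod n)) = {j, j + 1, y} := by
      ext a
      simp only [Finset.mem_insert, Finset.mem_singleton]
      tauto
    rw [this]
    exact hB

end M2Aux

theorem M2_maximal_low_pair_degree (n : ℕ) (hn : 8 ≤ n)
    (H : Finset (Finset (ZMod n))) (hcgh : IsCgh n H) (hfree : ¬ HasM2 n H)
    (hmax : ∀ e : Finset (ZMod n), e.card = 3 → e ∉ H → HasM2 n (insert e H)) :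
    ∃ i : ZMod n, (H.filter fun e => i ∈ e ∧ i + 1 ∈ e).card ≤ 3 := by
  haveI : NeZero n := ⟨by omega⟩
  haveI : Fact (1 < n) := ⟨by omega⟩
  by_contra hcon
  push_neg at hcon
  -- basic ZMod facts
  have hone : ((1 : ZMod n)).val = 1 := ZMod.val_one n
  have hone0 : (1 : ZMod n) ≠ 0 := by
    intro h
    rw [show (0 : ZMod n) = ((0 : ℕ) : ZMod n) by simp] at h
    have := congrArg ZMod.val h
    rw [hone, ZMod.val_cast_of_lt (by omega : 0 < n)] at this
    omega
  have hvalrep : ∀ z : ZMod n, ((z.val : ℕ) : ZMod n) = z := fun z => ZMod.natCast_rightInverse z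
  -- the set of third vertices over the pair {i, i+1}
  let S : ZMod n → Finset (ZMod n) := fun i =>
    Finset.univ.filter (fun x => ({i, i + 1, x} : Finset (ZMod n)) ∈ H ∧ 2 ≤ (x - i).val)
  have hmem : ∀ i x : ZMod n,
      x ∈ S i ↔ (({i, i + 1, x} : Finset (ZMod n)) ∈ H ∧ 2 ≤ (x - i).val) := by
    intro i x
    simp [S]
  -- every pair has at least 4 third vertices
  have hcard : ∀ i : ZMod n, 4 ≤ (S i).card := by
    intro i
    have h4 : 4 ≤ (H.filter fun e => i ∈ e ∧ i + 1 ∈ e).card := by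
      have := hcon i
      omega
    have hne : i ≠ i + 1 := by
      intro h
      apply hone0
      have : i + 0 = i + 1 := by rw [add_zero]; exact h
      exact (add_left_cancel this).symm
    have hsub : (H.filter fun e => i ∈ e ∧ i + 1 ∈ e) ⊆
        (S i).image (fun x => ({i, i + 1, x} : Finset (ZMod n))) := by
      intro e he
      rw [Finset.mem_filter] at he
      obtain ⟨heH, hie, hi1e⟩ := he
      have hc3 : e.card = 3 := hcgh e heH
      have hc1 : ((e.erase i).erase (i + 1)).card = 1 := by
        rw [Finset.card_erase_of_mem, Finset.card_erase_of_mem hie, hc3]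
        exact Finset.mem_erase.mpr ⟨Ne.symm hne, hi1e⟩
      obtain ⟨x, hx⟩ := Finset.card_eq_one.mp hc1
      have hxmem : x ∈ (e.erase i).erase (i + 1) := by rw [hx]; exact Finset.mem_singleton_self x
      have hxi1 : x ≠ i + 1 := (Finset.mem_erase.mp hxmem).1
      have hxi : x ≠ i := (Finset.mem_erase.mp (Finset.mem_erase.mp hxmem).2).1
      have hxe : x ∈ e := Finset.mem_of_mem_erase (Finset.mem_of_mem_erase hxmem)
      have hex : e = {i, i + 1, x} := by
        have h1 : insert (i + 1) ((e.erase i).erase (i + 1)) = e.erase i :=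
          Finset.insert_erase (Finset.mem_erase.mpr ⟨Ne.symm hne, hi1e⟩)
        have h2 : insert i (e.erase i) = e := Finset.insert_erase hie
        rw [← h2, ← h1, hx]
      have hxS : x ∈ S i := by
        rw [hmem]
        refine ⟨hex ▸ heH, ?_⟩
        have hv0 : (x - i).val ≠ 0 := by
          intro h
          apply hxi
          have : x - i = 0 := by
            have := hvalrep (x - i)
            rw [h] at this
            simpa using this.symm
          have := sub_eq_zero.mp this
          exact this
        have hv1' : (x - i).val ≠ 1 := by
          intro h
          apply hxi1
          have : x - i = 1 := by
            have := hvalrep (x - i)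
            rw [h] at this
            simpa using this.symm
          have h2 := sub_eq_iff_eq_add.mp this
          rw [h2, add_comm]
        omega
      rw [Finset.mem_image]
      exact ⟨x, hxS, hex.symm⟩
    calc (4 : ℕ) ≤ (H.filter fun e => i ∈ e ∧ i + 1 ∈ e).card := h4
      _ ≤ ((S i).image (fun x => ({i, i + 1, x} : Finset (ZMod n)))).card :=
          Finset.card_le_card hsub
      _ ≤ (S i).card := Finset.card_image_le
  -- every pair has a "far" third vertex
  have hfarval : ∀ (i x : ZMod n), x ∈ S i → 2 ≤ (x - i).val ∧ (x - i).val ≤ n - 1 := by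
    intro i x hx
    have h2 := ((hmem i x).mp hx).2
    have := ZMod.val_lt (x - i)
    omega
  have hfar : ∀ i : ZMod n, ∃ x ∈ S i, 4 ≤ (x - i).val ∧ (x - i).val ≤ n - 2 := by
    intro i
    by_contra hno
    push_neg at hno
    have hsub : ∀ x ∈ S i, x = i + ((2 : ℕ) : ZMod n) ∨ x = i + ((3 : ℕ) : ZMod n) ∨
        x = i + ((n - 1 : ℕ) : ZMod n) := by
      intro x hx
      obtain ⟨h2, hn1⟩ := hfarval i x hx
      have hno' := hno x hx
      have hval : (x - i).val = 2 ∨ (x - i).val = 3 ∨ (x - i).val = n - 1 := by omega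
      have hxrep : x = i + (((x - i).val : ℕ) : ZMod n) := by
        rw [hvalrep (x - i)]; ring
      rcases hval with h | h | h
      · left; rw [hxrep, h]
      · right; left; rw [hxrep, h]
      · right; right; rw [hxrep, h]
    have := M2Aux.card_le_three _ _ _ (S i) hsub
    have := hcard i
    omega
  -- minimize the far distance
  let T : Set ℕ := {t | ∃ (p x : ZMod n), x ∈ S p ∧ (x - p).val = t ∧ 4 ≤ t ∧ t ≤ n - 2}
  have hTne : T.Nonempty := by
    obtain ⟨x, hx, h4, hn2⟩ := hfar 0
    exact ⟨(x - 0).val, 0, x, hx, rfl, h4, hn2⟩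
  set t₀ := sInf T with ht₀def
  obtain ⟨j₀, w, hwS, hwval, ht4, htn2⟩ := Nat.sInf_mem hTne
  rw [← ht₀def] at hwval ht4 htn2
  have hmin : ∀ (p x : ZMod n), x ∈ S p → 4 ≤ (x - p).val → (x - p).val ≤ n - 2 →
      t₀ ≤ (x - p).val := by
    intro p x h h4 hn2
    exact Nat.sInf_le ⟨p, x, h, rfl, h4, hn2⟩
  -- set up coordinates anchored at j₀
  have hdiff : ∀ a b : ℕ, a < n → b < n →
      ((j₀ + (a : ZMod n)) - (j₀ + (b : ZMod n))).val = if b ≤ a then a - b else n + a - b := by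
    intro a b ha hb
    have h0 : (j₀ + (a : ZMod n)) - (j₀ + (b : ZMod n)) = (a : ZMod n) - (b : ZMod n) := by ring
    rw [h0]
    split_ifs with hba
    · rw [← Nat.cast_sub hba, ZMod.val_cast_of_lt (by omega)]
    · have hcast : ((n + a - b : ℕ) : ZMod n) = (a : ZMod n) - (b : ZMod n) := by
        rw [Nat.cast_sub (by omega), Nat.cast_add, ZMod.natCast_self, zero_add]
      rw [← hcast, ZMod.val_cast_of_lt (by omega)]
  set k := t₀ - 2 with hkdef
  have hk2 : 2 ≤ k := by omega
  have hkn : k ≤ n - 4 := by omega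
  have hkt : k + 2 = t₀ := by omega
  set q : ZMod n := j₀ + (k : ZMod n) with hqdef
  have hw : w = j₀ + ((t₀ : ℕ) : ZMod n) := by
    rw [← hwval, hvalrep (w - j₀)]; ring
  have hj0 : j₀ = j₀ + ((0 : ℕ) : ZMod n) := by simp
  -- X' : no element of S q sits at position ρ with ρ + 3 ≤ k
  have hX : ∀ ρ : ℕ, ρ + 3 ≤ k → (j₀ + (ρ : ZMod n)) ∈ S q → False := by
    intro ρ hρk hzS
    set m : ZMod n := j₀ + ((ρ + 1 : ℕ) : ZMod n) with hmdef
    have hρn : ρ < n := by omega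
    -- every element of S m is one of three vertices
    have hsub : ∀ z' ∈ S m, z' = j₀ + ((ρ : ℕ) : ZMod n) ∨
        z' = j₀ + ((ρ + 3 : ℕ) : ZMod n) ∨ z' = j₀ + ((ρ + 4 : ℕ) : ZMod n) := by
      intro z' hz'
      set σ := (z' - j₀).val with hσdef
      have hσn : σ < n := ZMod.val_lt _
      have hz'rep : z' = j₀ + ((σ : ℕ) : ZMod n) := by
        rw [hσdef, hvalrep (z' - j₀)]; ring
      -- value computations
      have hv1 : ((j₀ + (ρ : ZMod n)) - q).val = n + ρ - k := by
        rw [hqdef, hdiff ρ k hρn (by omega)]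
        rw [if_neg (by omega)]
      have hv2 : (m - q).val = n + (ρ + 1) - k := by
        rw [hmdef, hqdef, hdiff (ρ + 1) k (by omega) (by omega)]
        rw [if_neg (by omega)]
      have hv3 : (z' - q).val = if k ≤ σ then σ - k else n + σ - k := by
        rw [hz'rep, hqdef, hdiff σ k hσn (by omega)]
      have hv4 : (z' - m).val = if ρ + 1 ≤ σ then σ - (ρ + 1) else n + σ - (ρ + 1) := by
        rw [hz'rep, hmdef, hdiff σ (ρ + 1) hσn (by omega)]
      -- (F) applied with i := q, x := j₀+ρ, j := m, y := z'
      have hFA : ¬ (2 ≤ (z' - q).val ∧ (z' - q).val < ((j₀ + (ρ : ZMod n)) - q).val) := by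
        rintro ⟨c1, c2⟩
        refine M2Aux.key hn H hfree q m (j₀ + (ρ : ZMod n)) z' ?_ ?_ c1 c2 ?_ ?_
        · exact ((hmem q _).mp hzS).1
        · exact ((hmem m _).mp hz').1
        · rw [hv1, hv2]; omega
        · rw [hv2]; omega
      -- hence σ ∈ [ρ, k+1]
      have hσrange : ρ ≤ σ ∧ σ ≤ k + 1 := by
        by_cases hkσ : k ≤ σ
        · rw [hv3, if_pos hkσ] at hFA
          rw [hv1] at hFA
          constructor
          · omega
          · -- σ - k ≤ 1 (else the chain would hold, since σ - k ≥ n + ρ - k is impossible)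
            by_contra hgt
            exact hFA ⟨by omega, by omega⟩
        · rw [hv3, if_neg hkσ] at hFA
          rw [hv1] at hFA
          constructor
          · by_contra hlt
            exact hFA ⟨by omega, by omega⟩
          · omega
      have hz'in := ((hmem m z').mp hz').2
      rw [hv4] at hz'in
      -- case on σ
      by_cases hσρ : σ = ρ
      · left; rw [hz'rep, hσρ]
      · have hσge : ρ + 1 ≤ σ := by omega
        rw [if_pos hσge] at hz'in
        -- σ - (ρ+1) ∈ [2, k - ρ]; minimality forbids values in [4, n-2]
        have hd : σ - (ρ + 1) ≤ k - ρ := by omega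
        by_cases hσ3 : σ = ρ + 3
        · right; left; rw [hz'rep, hσ3]
        · by_cases hσ4 : σ = ρ + 4
          · right; right; rw [hz'rep, hσ4]
          · exfalso
            -- then (z' - m).val ∈ [4, n-2] but < t₀ : contradiction with hmin
            have h4le : 4 ≤ (z' - m).val := by rw [hv4, if_pos hσge]; omega
            have hlen : (z' - m).val ≤ n - 2 := by rw [hv4, if_pos hσge]; omega
            have := hmin m z' hz' h4le hlen
            rw [hv4, if_pos hσge] at this
            omega
    have hle3 := M2Aux.card_le_three _ _ _ (S m) hsub
    have := hcard m
    omega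
  -- the main squeeze at the pair q
  have hsubq : ∀ z ∈ S q, z = j₀ + ((k - 2 : ℕ) : ZMod n) ∨
      z = j₀ + ((k - 1 : ℕ) : ZMod n) ∨ z = j₀ + ((t₀ : ℕ) : ZMod n) := by
    intro z hz
    set ρ := (z - j₀).val with hρdef
    have hρn : ρ < n := ZMod.val_lt _
    have hzrep : z = j₀ + ((ρ : ℕ) : ZMod n) := by
      rw [hρdef, hvalrep (z - j₀)]; ring
    have hvz : (z - q).val = if k ≤ ρ then ρ - k else n + ρ - k := by
      rw [hzrep, hqdef, hdiff ρ k hρn (by omega)]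
    have hz2 := ((hmem q z).mp hz).2
    -- case analysis on ρ
    rcases Nat.lt_or_ge ρ k with hρk | hρk
    · -- ρ < k : either ρ + 3 ≤ k (forbidden by hX) or ρ ∈ {k-2, k-1}
      rcases Nat.lt_or_ge (ρ + 3) (k + 1) with h3 | h3
      · exact absurd (hzrep ▸ hz) (fun h => hX ρ (by omega) h)
      · -- ρ = k - 2 or ρ = k - 1
        have : ρ = k - 2 ∨ ρ = k - 1 := by omega
        rcases this with h | h
        · left; rw [hzrep, h]
        · right; left; rw [hzrep, h]
    · rcases Nat.lt_or_ge ρ (k + 2) with hρk2 | hρk2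
      · -- ρ = k or k+1 : z would be q or q+1, contradicting (z - q).val ≥ 2
        exfalso
        rw [hvz, if_pos hρk] at hz2
        omega
      · rcases Nat.lt_or_ge ρ (k + 3) with hρk3 | hρk3
        · -- ρ = k + 2 = t₀
          right; right
          rw [hzrep]
          congr 1
          congr 1
          omega
        · -- ρ ≥ k + 3 = t₀ + 1 : the TRAP, apply (F) with i := q, x := z, y := w, j := j₀
          exfalso
          have hvw : (w - q).val = 2 := by
            rw [hw, hqdef, hdiff t₀ k (by omega) (by omega), if_pos (by omega)]
            omega
          have hvj : (j₀ - q).val = n - k := by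
            conv_lhs => rw [hj0]
            rw [hqdef, hdiff 0 k (by omega) (by omega), if_neg (by omega)]
            omega
          refine M2Aux.key hn H hfree q j₀ z w ?_ ?_ ?_ ?_ ?_ ?_
          · exact ((hmem q z).mp hz).1
          · exact ((hmem j₀ w).mp hwS).1
          · rw [hvw]
          · rw [hvw, hvz, if_pos hρk]; omega
          · rw [hvz, hvj, if_pos hρk]; omega
          · rw [hvj]; omega
  have hle3 := M2Aux.card_le_three _ _ _ (S q) hsubq
  have := hcard q
  omega
end

section
/- Let n ≥ 4, let H be an S_3-free cgh on Ω_n, and let u ∈ Ω_n. Then the number of edges {w,x} of the link graph G_u such that w and x are not cyclically consecutive vertices of Ω_n is at most n − 3. -/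
/-- `H` contains a copy of the configuration `S₃`: two triples sharing exactly
the vertex `v`, with the five vertices in clockwise cyclic order `v, a₁, b₁, a₂, b₂`. -/
def HasS3 (n : ℕ) (H : Finset (Finset (ZMod n))) : Prop :=
  ∃ v a₁ a₂ b₁ b₂ : ZMod n,
    CWList n [v, a₁, b₁, a₂, b₂] ∧
    ({v, a₁, a₂} : Finset (ZMod n)) ∈ H ∧ ({v, b₁, b₂} : Finset (ZMod n)) ∈ H

def csh (a x : ℕ) : ℕ := if x ≤ a then x else x - 1

lemma csh_lt_iff {a b x y : ℕ} (hab : a + 2 ≤ b) (hx : x ≤ a ∨ b ≤ x)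
    (hy : y ≤ a ∨ b ≤ y) : csh a x < csh a y ↔ x < y := by
  unfold csh; split_ifs <;> omega

lemma chord_bound : ∀ (m : ℕ) (F : Finset (ℕ × ℕ)),
    (∀ p ∈ F, 1 ≤ p.1 ∧ p.1 + 2 ≤ p.2 ∧ p.2 ≤ m) →
    (∀ p ∈ F, ∀ q ∈ F, ¬(p.1 < q.1 ∧ q.1 < p.2 ∧ p.2 < q.2)) →
    F.card ≤ m - 2 := by
  intro m
  induction m using Nat.strong_induction_on with
  | _ m ih =>
    intro F hbd hnc
    rcases F.eq_empty_or_nonempty with rfl | hne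
    · simp
    obtain ⟨ab, habF, hmin⟩ := F.exists_min_image (fun p => p.2 - p.1) hne
    obtain ⟨ha1, hab2, habm⟩ := hbd ab habF
    have hout : ∀ p ∈ F, p ≠ ab →
        (p.1 ≤ ab.1 ∨ ab.2 ≤ p.1) ∧ (p.2 ≤ ab.1 ∨ ab.2 ≤ p.2) := by
      intro p hp hpne
      obtain ⟨hc1, hcd2, hdm⟩ := hbd p hp
      have h1 := hnc ab habF p hp
      have h2 := hnc p hp ab habF
      have h3 := hmin p hp
      have hne' : p.1 ≠ ab.1 ∨ p.2 ≠ ab.2 := by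
        by_contra h; push_neg at h; exact hpne (Prod.ext h.1 h.2)
      omega
    set G : Finset (ℕ × ℕ) := (F.erase ab).image (fun p => (csh ab.1 p.1, csh ab.1 p.2)) with hG
    have hmemdata : ∀ p ∈ F.erase ab,
        (p.1 ≤ ab.1 ∨ ab.2 ≤ p.1) ∧ (p.2 ≤ ab.1 ∨ ab.2 ≤ p.2) ∧
        1 ≤ p.1 ∧ p.1 + 2 ≤ p.2 ∧ p.2 ≤ m ∧ (p.1 ≠ ab.1 ∨ p.2 ≠ ab.2) := by
      intro p hp
      obtain ⟨hpne, hpF⟩ := Finset.mem_erase.1 hp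
      obtain ⟨o1, o2⟩ := hout p hpF hpne
      obtain ⟨b1, b2, b3⟩ := hbd p hpF
      refine ⟨o1, o2, b1, b2, b3, ?_⟩
      by_contra h; push_neg at h; exact hpne (Prod.ext h.1 h.2)
    have hinj : Set.InjOn (fun p : ℕ × ℕ => (csh ab.1 p.1, csh ab.1 p.2)) ↑(F.erase ab) := by
      intro p hp q hq heq
      obtain ⟨p1, p2, p3, p4, p5, p6⟩ := hmemdata p hp
      obtain ⟨q1, q2, q3, q4, q5, q6⟩ := hmemdata q hq
      simp only [Prod.mk.injEq] at heq
      have e1 : p.1 = q.1 := by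
        have := heq.1; unfold csh at this; split_ifs at this <;> omega
      have e2 : p.2 = q.2 := by
        have := heq.2; unfold csh at this; split_ifs at this <;> omega
      exact Prod.ext e1 e2
    have hGcard : G.card = F.card - 1 := by
      rw [hG, Finset.card_image_of_injOn hinj, Finset.card_erase_of_mem habF]
    have hbdG : ∀ q ∈ G, 1 ≤ q.1 ∧ q.1 + 2 ≤ q.2 ∧ q.2 ≤ m - 1 := by
      intro q hq
      obtain ⟨p, hp, rfl⟩ := Finset.mem_image.1 hq
      obtain ⟨p1, p2, p3, p4, p5, p6⟩ := hmemdata p hp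
      unfold csh; split_ifs <;> omega
    have hncG : ∀ p ∈ G, ∀ q ∈ G, ¬(p.1 < q.1 ∧ q.1 < p.2 ∧ p.2 < q.2) := by
      intro p' hp' q' hq' hcr
      obtain ⟨p, hp, rfl⟩ := Finset.mem_image.1 hp'
      obtain ⟨q, hq, rfl⟩ := Finset.mem_image.1 hq'
      obtain ⟨p1, p2, p3, p4, p5, p6⟩ := hmemdata p hp
      obtain ⟨q1, q2, q3, q4, q5, q6⟩ := hmemdata q hq
      simp only at hcr
      refine hnc p (Finset.mem_of_mem_erase hp) q (Finset.mem_of_mem_erase hq) ?_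
      exact ⟨(csh_lt_iff hab2 p1 q1).1 hcr.1, (csh_lt_iff hab2 q1 p2).1 hcr.2.1,
        (csh_lt_iff hab2 p2 q2).1 hcr.2.2⟩
    have hGle := ih (m - 1) (by omega) G hbdG hncG
    have hF1 : F.card = (F.erase ab).card + 1 := (Finset.card_erase_add_one habF).symm
    omega

theorem S3_link_noncons (n : ℕ) (hn : 4 ≤ n)
    (H : Finset (Finset (ZMod n))) (hcgh : IsCgh n H) (hfree : ¬ HasS3 n H)
    (u : ZMod n) :
    {p : Finset (ZMod n) | ∃ w x : ZMod n, w ≠ x ∧ p = {w, x} ∧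
        ({u, w, x} : Finset (ZMod n)) ∈ H ∧
        ¬ (x = w + 1 ∨ w = x + 1)}.ncard ≤ n - 3 := by
  haveI : NeZero n := ⟨by omega⟩
  set d : ZMod n → ℕ := fun v => (v - u).val with hd
  have hcast : ∀ v : ZMod n, ((d v : ℕ) : ZMod n) = v - u := by
    intro v; rw [hd]; simp [ZMod.natCast_val, ZMod.cast_id]
  have dinj : ∀ a b : ZMod n, d a = d b → a = b := by
    intro a b h
    have h1 : ((d a : ℕ) : ZMod n) = ((d b : ℕ) : ZMod n) := by rw [h]
    rw [hcast, hcast] at h1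
    exact sub_left_injective h1
  set f : Finset (ZMod n) → ℕ × ℕ :=
    fun e => (n - e.sup (fun v => n - d v), e.sup d) with hf
  -- key extraction lemma (ordered version)
  have main : ∀ w x : ZMod n, d w < d x → ({u, w, x} : Finset (ZMod n)) ∈ H →
      ¬ (x = w + 1 ∨ w = x + 1) →
      1 ≤ d w ∧ d w + 2 ≤ d x ∧ d x ≤ n - 1 ∧ f {w, x} = (d w, d x) := by
    intro w x hlt heH hcons
    have hcard := hcgh _ heH
    have hwu : w ≠ u := by
      intro h
      rw [h, Finset.insert_idem] at hcard
      have h2 : ({u, x} : Finset (ZMod n)).card ≤ 2 :=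
        (Finset.card_insert_le _ _).trans (by simp)
      omega
    have hdw1 : 1 ≤ d w := by
      rcases Nat.eq_zero_or_pos (d w) with h | h
      · exfalso; apply hwu
        have : w - u = 0 := by rw [← ZMod.val_eq_zero]; exact h
        exact sub_eq_zero.1 this
      · exact h
    have hdxn : d x ≤ n - 1 := by
      have : d x < n := ZMod.val_lt (x - u)
      omega
    have hgap : d w + 2 ≤ d x := by
      by_contra hg
      have hdx : d x = d w + 1 := by omega
      apply hcons
      left
      have e1 : x - u = ((d w + 1 : ℕ) : ZMod n) := by rw [← hdx, hcast]
      have e2 : w - u = ((d w : ℕ) : ZMod n) := (hcast w).symm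
      have hsub : x - w = 1 := by
        have h0 : x - w = (x - u) - (w - u) := by ring
        rw [h0, e1, e2]; push_cast; ring
      exact sub_eq_iff_eq_add'.mp hsub
    refine ⟨hdw1, hgap, hdxn, ?_⟩
    have hsup1 : ({w, x} : Finset (ZMod n)).sup (fun v => n - d v) = n - d w := by
      rw [Finset.sup_insert, Finset.sup_singleton]
      exact sup_eq_left.2 (by omega)
    have hsup2 : ({w, x} : Finset (ZMod n)).sup d = d x := by
      rw [Finset.sup_insert, Finset.sup_singleton]
      exact sup_eq_right.2 (le_of_lt hlt)
    rw [hf]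
    simp only [hsup1, hsup2, Prod.mk.injEq]
    exact ⟨by omega, trivial⟩
  set S : Set (Finset (ZMod n)) := {p : Finset (ZMod n) | ∃ w x : ZMod n, w ≠ x ∧ p = {w, x} ∧
        ({u, w, x} : Finset (ZMod n)) ∈ H ∧ ¬ (x = w + 1 ∨ w = x + 1)} with hS
  have key : ∀ e ∈ S, ∃ w x : ZMod n, d w < d x ∧ e = {w, x} ∧
      ({u, w, x} : Finset (ZMod n)) ∈ H ∧
      1 ≤ d w ∧ d w + 2 ≤ d x ∧ d x ≤ n - 1 ∧ f e = (d w, d x) := by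
    intro e he
    obtain ⟨w, x, hne, rfl, heH, hcons⟩ := he
    rcases lt_trichotomy (d w) (d x) with h | h | h
    · obtain ⟨a1, a2, a3, a4⟩ := main w x h heH hcons
      exact ⟨w, x, h, rfl, heH, a1, a2, a3, a4⟩
    · exact absurd (dinj _ _ h) hne
    · have heH' : ({u, x, w} : Finset (ZMod n)) ∈ H := by
        rwa [Finset.pair_comm x w]
      have hcons' : ¬ (w = x + 1 ∨ x = w + 1) := by tauto
      obtain ⟨a1, a2, a3, a4⟩ := main x w h heH' hcons'
      refine ⟨x, w, h, Finset.pair_comm w x, heH', a1, a2, a3, ?_⟩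
      rwa [Finset.pair_comm w x]
  classical
  have hSfin : S.Finite := Set.toFinite S
  have hinjS : Set.InjOn f S := by
    intro e he e' he' heq
    obtain ⟨w, x, _, rfl, _, _, _, _, hfe⟩ := key e he
    obtain ⟨w', x', _, rfl, _, _, _, _, hfe'⟩ := key e' he'
    rw [hfe, hfe', Prod.mk.injEq] at heq
    rw [dinj _ _ heq.1, dinj _ _ heq.2]
  set F0 : Finset (ℕ × ℕ) := hSfin.toFinset.image f with hF0
  have hmemF0 : ∀ q ∈ F0, ∃ e ∈ S, f e = q := by
    intro q hq
    obtain ⟨e, he, rfl⟩ := Finset.mem_image.1 hq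
    exact ⟨e, hSfin.mem_toFinset.1 he, rfl⟩
  have hbdF0 : ∀ p ∈ F0, 1 ≤ p.1 ∧ p.1 + 2 ≤ p.2 ∧ p.2 ≤ n - 1 := by
    intro p hp
    obtain ⟨e, he, rfl⟩ := hmemF0 p hp
    obtain ⟨w, x, _, _, _, a1, a2, a3, hfe⟩ := key e he
    rw [hfe]
    exact ⟨a1, a2, a3⟩
  have hncF0 : ∀ p ∈ F0, ∀ q ∈ F0, ¬(p.1 < q.1 ∧ q.1 < p.2 ∧ p.2 < q.2) := by
    intro p hp q hq hcr
    obtain ⟨e, he, rfl⟩ := hmemF0 p hp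
    obtain ⟨e', he', rfl⟩ := hmemF0 q hq
    obtain ⟨w, x, hwx, _, heH, b1, b2, b3, hfe⟩ := key e he
    obtain ⟨y, z, hyz, _, heH', c1, c2, c3, hfe'⟩ := key e' he'
    rw [hfe, hfe'] at hcr
    simp only at hcr
    apply hfree
    refine ⟨u, w, x, y, z, ?_, heH, heH'⟩
    show List.Chain' (· < ·)
      ((0 : ℕ) :: List.map (fun b => (b - u).val) [w, y, x, z])
    simp only [List.Chain', List.map_cons, List.map_nil, List.isChain_cons_cons, List.isChain_singleton]
    simp only [hd] at b1 b2 b3 c1 c2 c3 hwx hyz hcr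
    refine ⟨?_, ?_, ?_, ?_, trivial⟩ <;> omega
  have hcardF0 := chord_bound (n - 1) F0 hbdF0 hncF0
  have himg : f '' S = ↑F0 := by
    rw [hF0, Finset.coe_image, Set.Finite.coe_toFinset]
  have h1 : S.ncard = F0.card := by
    rw [← Set.ncard_image_of_injOn hinjS, himg, Set.ncard_coe_finset]
  omega
end

section
/- Let H be an S_3-free cgh on Ω_n and let u and v be cyclically consecutive vertices of Ω_n (v = u+1). For a vertex w, let G_w' denote the set of edges of the link graph G_w that consist of two cyclically consecutive vertices of Ω_n. Then |G_u'| + |G_v'| ≤ n. -/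
lemma S3aux_key (n : ℕ) (hn : 3 ≤ n) (H : Finset (Finset (ZMod n)))
    (hfree : ¬ HasS3 n H) (u j : ZMod n)
    (hd1 : 2 ≤ (u - (j+1)).val) (hd2 : (u - (j+1)).val ≤ n - 3)
    (h1 : ({u, j, j + 1} : Finset (ZMod n)) ∈ H)
    (h2 : ({u + 1, j + 1, j + 1 + 1} : Finset (ZMod n)) ∈ H) : False := by
  haveI : NeZero n := ⟨by omega⟩
  haveI : Fact (1 < n) := ⟨by omega⟩
  apply hfree
  refine ⟨j+1, j+1+1, u+1, u, j, ?_, ?_, ?_⟩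
  · unfold CWList
    simp only [List.map_cons, List.map_nil, List.isChain_cons_cons, List.isChain_singleton, and_true]
    have e1 : (j+1+1 - (j+1)) = (1 : ZMod n) := by ring
    have e2 : (u + 1 - (j+1)) = (u - (j+1)) + 1 := by ring
    have e3 : (j - (j+1)) = (-1 : ZMod n) := by ring
    have v1 : (1 : ZMod n).val = 1 := ZMod.val_one n
    have vneg : (-1 : ZMod n).val = n - 1 := by
      have : (-1 : ZMod n) = ((n-1 : ℕ) : ZMod n) := by
        push_cast [Nat.cast_sub (by omega : 1 ≤ n)]
        simp [ZMod.natCast_self]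
      rw [this, ZMod.val_cast_of_lt (by omega)]
    have hdlt : (u - (j+1)).val < n := ZMod.val_lt _
    have v2 : ((u - (j+1)) + 1).val = (u - (j+1)).val + 1 := by
      rw [ZMod.val_add_of_lt (by omega), v1]
    rw [e1, e2, e3, v1, vneg, v2]
    refine List.isChain_cons_cons.mpr ⟨by omega, List.isChain_cons_cons.mpr ⟨by omega,
      List.isChain_cons_cons.mpr ⟨by omega, List.isChain_cons_cons.mpr ⟨by omega,
        List.isChain_singleton _⟩⟩⟩⟩
  · have : ({j+1, j+1+1, u+1} : Finset (ZMod n)) = {u + 1, j + 1, j + 1 + 1} := by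
      ext x; simp; tauto
    rw [this]; exact h2
  · have : ({j+1, u, j} : Finset (ZMod n)) = {u, j, j + 1} := by
      ext x; simp; tauto
    rw [this]; exact h1

lemma S3aux_aab (n : ℕ) (H : Finset (Finset (ZMod n))) (hcgh : IsCgh n H)
    (x y : ZMod n) : ({x, x, y} : Finset (ZMod n)) ∉ H := by
  intro h
  have h3 := hcgh _ h
  have hsub : ({x, x, y} : Finset (ZMod n)) ⊆ {x, y} := by
    intro t ht; simp at ht ⊢; tauto
  have := Finset.card_le_card hsub
  have h2 : ({x, y} : Finset (ZMod n)).card ≤ 2 := by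
    apply le_trans (Finset.card_insert_le _ _); simp
  omega

lemma S3aux_aba (n : ℕ) (H : Finset (Finset (ZMod n))) (hcgh : IsCgh n H)
    (x y : ZMod n) : ({x, y, x} : Finset (ZMod n)) ∉ H := by
  intro h
  have h3 := hcgh _ h
  have hsub : ({x, y, x} : Finset (ZMod n)) ⊆ {x, y} := by
    intro t ht; simp at ht ⊢; tauto
  have := Finset.card_le_card hsub
  have h2 : ({x, y} : Finset (ZMod n)).card ≤ 2 := by
    apply le_trans (Finset.card_insert_le _ _); simp
  omega

theorem S3_link_cons (n : ℕ) (hn : 3 ≤ n)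
    (H : Finset (Finset (ZMod n))) (hcgh : IsCgh n H) (hfree : ¬ HasS3 n H)
    (u : ZMod n) :
    {p : Finset (ZMod n) | ∃ j : ZMod n, p = {j, j + 1} ∧
        ({u, j, j + 1} : Finset (ZMod n)) ∈ H}.ncard +
    {p : Finset (ZMod n) | ∃ j : ZMod n, p = {j, j + 1} ∧
        ({u + 1, j, j + 1} : Finset (ZMod n)) ∈ H}.ncard ≤ n := by
  haveI : NeZero n := ⟨by omega⟩
  haveI : Fact (1 < n) := ⟨by omega⟩
  classical
  set A : Finset (ZMod n) :=
    Finset.univ.filter (fun j => ({u, j, j+1} : Finset (ZMod n)) ∈ H) with hA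
  set B : Finset (ZMod n) :=
    Finset.univ.filter (fun j => ({u+1, j, j+1} : Finset (ZMod n)) ∈ H) with hB
  have hSA : {p : Finset (ZMod n) | ∃ j : ZMod n, p = {j, j + 1} ∧
      ({u, j, j + 1} : Finset (ZMod n)) ∈ H}
      = (fun j : ZMod n => ({j, j+1} : Finset (ZMod n))) '' (A : Set (ZMod n)) := by
    ext p
    simp only [Set.mem_setOf_eq, Set.mem_image, Finset.coe_filter, Set.mem_setOf_eq, hA,
      Finset.mem_coe, Finset.mem_filter, Finset.mem_univ, true_and]
    constructor
    · rintro ⟨j, rfl, hj⟩; exact ⟨j, hj, rfl⟩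
    · rintro ⟨j, hj, rfl⟩; exact ⟨j, rfl, hj⟩
  have hSB : {p : Finset (ZMod n) | ∃ j : ZMod n, p = {j, j + 1} ∧
      ({u + 1, j, j + 1} : Finset (ZMod n)) ∈ H}
      = (fun j : ZMod n => ({j, j+1} : Finset (ZMod n))) '' (B : Set (ZMod n)) := by
    ext p
    simp only [Set.mem_setOf_eq, Set.mem_image, hB,
      Finset.mem_coe, Finset.mem_filter, Finset.mem_univ, true_and]
    constructor
    · rintro ⟨j, rfl, hj⟩; exact ⟨j, hj, rfl⟩
    · rintro ⟨j, hj, rfl⟩; exact ⟨j, rfl, hj⟩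
  have hbA : {p : Finset (ZMod n) | ∃ j : ZMod n, p = {j, j + 1} ∧
      ({u, j, j + 1} : Finset (ZMod n)) ∈ H}.ncard ≤ A.card := by
    rw [hSA]
    calc _ ≤ (A : Set (ZMod n)).ncard := Set.ncard_image_le (Set.toFinite _)
    _ = A.card := Set.ncard_coe_finset _
  have hbB : {p : Finset (ZMod n) | ∃ j : ZMod n, p = {j, j + 1} ∧
      ({u + 1, j, j + 1} : Finset (ZMod n)) ∈ H}.ncard ≤ B.card := by
    rw [hSB]
    calc _ ≤ (B : Set (ZMod n)).ncard := Set.ncard_image_le (Set.toFinite _)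
    _ = B.card := Set.ncard_coe_finset _
  have hmain : A.card + B.card ≤ n := by
    have hAcard : A.card = ∑ j : ZMod n,
        (if ({u, j, j+1} : Finset (ZMod n)) ∈ H then 1 else 0) :=
      Finset.card_filter _ _
    have hBcard : B.card = ∑ j : ZMod n,
        (if ({u+1, j+1, j+1+1} : Finset (ZMod n)) ∈ H then 1 else 0) := by
      rw [hB, Finset.card_filter]
      exact Fintype.sum_equiv (Equiv.addRight (1 : ZMod n)) _ _ (fun j => rfl) |>.symm
    rw [hAcard, hBcard, ← Finset.sum_add_distrib]
    have h1ne : (1 : ZMod n) ≠ 0 := by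
      intro h; have := congrArg ZMod.val h
      rw [ZMod.val_one n, ZMod.val_zero] at this; omega
    have h2ne : (2 : ZMod n) ≠ 0 := by
      intro h
      have h2 : ((2 : ℕ) : ZMod n) = 0 := by push_cast; exact h
      have := congrArg ZMod.val h2
      rw [ZMod.val_cast_of_lt (by omega : 2 < n), ZMod.val_zero] at this
      omega
    have hcast : ∀ m : ℕ, m < n → ∀ x : ZMod n, x.val = m → x = ((m : ℕ) : ZMod n) := by
      intro m hm x hx
      have h := ZMod.natCast_rightInverse (n := n) x
      rw [hx] at h
      exact h.symm
    have key2 : ∀ j : ZMod n,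
        ((if ({u, j, j+1} : Finset (ZMod n)) ∈ H then 1 else 0) +
         (if ({u+1, j+1, j+1+1} : Finset (ZMod n)) ∈ H then 1 else 0) : ℕ) ≤
        (if j = u - 1 ∨ j = u then 0 else 1) +
        (if j = u - 2 ∨ j = u + 1 then 1 else 0) := by
      intro j
      by_cases hc1 : j = u - 1 ∨ j = u
      · rcases hc1 with rfl | rfl
        · have e : u - 1 + 1 = u := by ring
          simp only [e]
          rw [if_neg (S3aux_aba n H hcgh u (u-1)), if_neg (S3aux_aba n H hcgh (u+1) u)]
          exact Nat.zero_le _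
        · rw [if_neg (S3aux_aab n H hcgh j (j+1)), if_neg (S3aux_aab n H hcgh (j+1) (j+1+1))]
          exact Nat.zero_le _
      · rw [if_neg hc1]
        push_neg at hc1
        by_cases hc2 : j = u - 2 ∨ j = u + 1
        · rw [if_pos hc2]
          split_ifs <;> omega
        · rw [if_neg hc2]
          push_neg at hc2
          have hdlt : (u - (j+1)).val < n := ZMod.val_lt _
          have hd0 : (u - (j+1)).val ≠ 0 := by
            intro h
            have hx : u - (j+1) = 0 := (ZMod.val_eq_zero _).mp h
            exact hc1.1 (by linear_combination -hx)
          have hd1 : (u - (j+1)).val ≠ 1 := by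
            intro h
            have hx := hcast 1 (by omega) _ h
            simp only [Nat.cast_one] at hx
            exact hc2.1 (by linear_combination -hx)
          have hdn1 : (u - (j+1)).val ≠ n - 1 := by
            intro h
            have hx := hcast (n-1) (by omega) _ h
            rw [Nat.cast_sub (by omega : 1 ≤ n), ZMod.natCast_self] at hx
            push_cast at hx
            exact hc1.2 (by linear_combination -hx)
          have hdn2 : (u - (j+1)).val ≠ n - 2 := by
            intro h
            have hx := hcast (n-2) (by omega) _ h
            rw [Nat.cast_sub (by omega : 2 ≤ n), ZMod.natCast_self] at hx
            push_cast at hx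
            exact hc2.2 (by linear_combination -hx)
          split_ifs with ha hb
          · exact (S3aux_key n hn H hfree u j (by omega) (by omega) ha hb).elim
          · omega
          · omega
          · omega
    calc ∑ j : ZMod n, ((if ({u, j, j+1} : Finset (ZMod n)) ∈ H then 1 else 0) +
          (if ({u+1, j+1, j+1+1} : Finset (ZMod n)) ∈ H then 1 else 0) : ℕ)
        ≤ ∑ j : ZMod n, ((if j = u - 1 ∨ j = u then 0 else 1) +
          (if j = u - 2 ∨ j = u + 1 then 1 else 0) : ℕ) :=
          Finset.sum_le_sum (fun j _ => key2 j)
      _ ≤ n := by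
          rw [Finset.sum_add_distrib]
          have hsum1 : (∑ j : ZMod n, (if j = u - 1 ∨ j = u then 0 else 1 : ℕ)) +
              (∑ j : ZMod n, (if j = u - 1 ∨ j = u then 1 else 0 : ℕ)) = n := by
            rw [← Finset.sum_add_distrib]
            have : ∀ j : ZMod n, ((if j = u - 1 ∨ j = u then 0 else 1) +
                (if j = u - 1 ∨ j = u then 1 else 0) : ℕ) = 1 := by
              intro j; split_ifs <;> rfl
            simp only [this, Finset.sum_const, Finset.card_univ, ZMod.card, smul_eq_mul, mul_one]
          have hne : u - 1 ≠ u := by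
            intro h
            exact h1ne (by linear_combination -h)
          have hsum2 : (∑ j : ZMod n, (if j = u - 1 ∨ j = u then 1 else 0 : ℕ)) = 2 := by
            rw [← Finset.card_filter]
            have : Finset.univ.filter (fun j : ZMod n => j = u - 1 ∨ j = u) = {u - 1, u} := by
              ext x; simp
            rw [this, Finset.card_insert_of_notMem (by simp [hne]), Finset.card_singleton]
          have hsum3 : (∑ j : ZMod n, (if j = u - 2 ∨ j = u + 1 then 1 else 0 : ℕ)) ≤ 2 := by
            rw [← Finset.card_filter]
            have hsub : Finset.univ.filter (fun j : ZMod n => j = u - 2 ∨ j = u + 1)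
                ⊆ {u - 2, u + 1} := by
              intro x hx; simp at hx ⊢; tauto
            refine le_trans (Finset.card_le_card hsub) ?_
            refine le_trans (Finset.card_insert_le _ _) ?_
            simp
          omega
  omega
end

section
/- Let H be an S_2-free cgh on Ω_n. Then: (1) every triple e ∈ H has at least two of its three pairs good for e; and (2) every pair in the shadow ∂H is good for at least one and at most two triples of H. -/
/-- `H` contains a copy of the configuration `S₂`: two triples sharing exactly
the vertex `v`, with the five vertices in clockwise cyclic order `v, b₁, a₁, a₂, b₂`. -/
def HasS2 (n : ℕ) (H : Finset (Finset (ZMod n))) : Prop :=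
  ∃ v a₁ a₂ b₁ b₂ : ZMod n,
    CWList n [v, b₁, a₁, a₂, b₂] ∧
    ({v, a₁, a₂} : Finset (ZMod n)) ∈ H ∧ ({v, b₁, b₂} : Finset (ZMod n)) ∈ H

/-- With `x, y, z` in clockwise cyclic order and `{x, y, z} ∈ H`, the pair
`{x, y}` is good for `{x, y, z}`: there is no `z'` strictly in the clockwise
arc from `y` to `z` with `{x, y, z'} ∈ H`. -/
def GoodFor (n : ℕ) (H : Finset (Finset (ZMod n))) (x y z : ZMod n) : Prop :=
  ¬ ∃ z' : ZMod n, CWList n [y, z', z] ∧ ({x, y, z'} : Finset (ZMod n)) ∈ H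

set_option linter.unusedSectionVars false

section helpers
variable {n : ℕ} [NeZero n]

lemma d_lt (x y : ZMod n) : (y - x).val < n := ZMod.val_lt _

lemma d_zero_iff (x y : ZMod n) : (y - x).val = 0 ↔ y = x := by
  rw [ZMod.val_eq_zero, sub_eq_zero]

lemma d_add (x y z : ZMod n) : (z - x).val = ((y - x).val + (z - y).val) % n := by
  have h : z - x = (y - x) + (z - y) := by ring
  rw [h, ZMod.val_add]

lemma d_cases (x y z : ZMod n) :
    (z - x).val = (y - x).val + (z - y).val ∨
    ((z - x).val + n = (y - x).val + (z - y).val ∧ n ≤ (y - x).val + (z - y).val) := by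
  have h := d_add x y z
  have h1 := d_lt x y
  have h2 := d_lt y z
  rcases Nat.lt_or_ge ((y - x).val + (z - y).val) n with hlt | hge
  · left; rw [h, Nat.mod_eq_of_lt hlt]
  · right
    refine ⟨?_, hge⟩
    rw [h, Nat.mod_eq_sub_mod hge, Nat.mod_eq_of_lt (by omega)]
    omega

lemma d_inj {x y z : ZMod n} (h : (y - x).val = (z - x).val) : y = z := by
  have : y - x = z - x := ZMod.val_injective _ h
  exact sub_left_injective this

lemma d_self (x : ZMod n) : (x - x).val = 0 := by simp

lemma cw3_iff (a b c : ZMod n) :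
    CWList n [a, b, c] ↔ 0 < (b - a).val ∧ (b - a).val < (c - a).val := by
  simp [CWList, List.Chain', List.isChain_cons_cons]

lemma cw5_iff (a b c d e : ZMod n) :
    CWList n [a, b, c, d, e] ↔ 0 < (b - a).val ∧ (b - a).val < (c - a).val ∧
      (c - a).val < (d - a).val ∧ (d - a).val < (e - a).val := by
  simp [CWList, List.Chain', List.isChain_cons_cons, and_assoc]


lemma tri_rot (u v z : ZMod n) : ({u, v, z} : Finset (ZMod n)) = {z, u, v} := by
  ext t; simp; tauto

/-- uniqueness of good extensions on a given side -/
lemma good_unique {H : Finset (Finset (ZMod n))} {u v z₁ z₂ : ZMod n}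
    (h₁ : ({u, v, z₁} : Finset (ZMod n)) ∈ H) (c₁ : CWList n [u, v, z₁])
    (g₁ : GoodFor n H u v z₁)
    (h₂ : ({u, v, z₂} : Finset (ZMod n)) ∈ H) (c₂ : CWList n [u, v, z₂])
    (g₂ : GoodFor n H u v z₂) : z₁ = z₂ := by
  rw [cw3_iff] at c₁ c₂
  have hz₁v : (z₁ - v).val ≠ 0 := by
    intro h0; rw [d_zero_iff] at h0; subst h0; omega
  have hz₂v : (z₂ - v).val ≠ 0 := by
    intro h0; rw [d_zero_iff] at h0; subst h0; omega
  rcases Nat.lt_trichotomy (z₁ - v).val (z₂ - v).val with h | h | h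
  · exact absurd ⟨z₁, (cw3_iff v z₁ z₂).mpr ⟨by omega, h⟩, h₁⟩ g₂
  · exact d_inj h
  · exact absurd ⟨z₂, (cw3_iff v z₂ z₁).mpr ⟨by omega, h⟩, h₂⟩ g₁

/-- existence of a good extension on a given side -/
lemma exists_good {H : Finset (Finset (ZMod n))} {u v w : ZMod n}
    (hw : ({u, v, w} : Finset (ZMod n)) ∈ H) (cw : CWList n [u, v, w]) :
    ∃ z, ({u, v, z} : Finset (ZMod n)) ∈ H ∧ CWList n [u, v, z] ∧ GoodFor n H u v z := by
  classical
  set T : Finset (ZMod n) :=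
    Finset.univ.filter (fun z => ({u, v, z} : Finset (ZMod n)) ∈ H ∧ CWList n [u, v, z]) with hT
  have hwT : w ∈ T := by simp [hT, hw, cw]
  obtain ⟨z₀, hz₀, hmin⟩ := T.exists_min_image (fun z => (z - v).val) ⟨w, hwT⟩
  rw [hT, Finset.mem_filter] at hz₀
  obtain ⟨-, hz₀H, hz₀cw⟩ := hz₀
  refine ⟨z₀, hz₀H, hz₀cw, ?_⟩
  rintro ⟨z', hz'cw, hz'H⟩
  rw [cw3_iff] at hz'cw
  have hc₀ := (cw3_iff u v z₀).mp hz₀cw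
  have hd1 := d_cases u v z₀
  have hd2 := d_cases u v z'
  have hb1 := d_lt v z₀
  have hb2 := d_lt v z'
  have hb3 := d_lt u z₀
  have hb4 := d_lt u z'
  have hz' : CWList n [u, v, z'] := (cw3_iff u v z').mpr (by omega)
  have : z' ∈ T := by simp [hT, hz'H, hz']
  have := hmin z' this
  omega

end helpers

theorem S2_good_pairs (n : ℕ) (hn : 3 ≤ n)
    (H : Finset (Finset (ZMod n))) (hcgh : IsCgh n H) (hfree : ¬ HasS2 n H) :
    (∀ a b c : ZMod n, CWList n [a, b, c] → ({a, b, c} : Finset (ZMod n)) ∈ H →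
      ((GoodFor n H a b c ∧ GoodFor n H b c a) ∨
       (GoodFor n H a b c ∧ GoodFor n H c a b) ∨
       (GoodFor n H b c a ∧ GoodFor n H c a b))) ∧
    (∀ u v : ZMod n, u ≠ v → (∃ e ∈ H, u ∈ e ∧ v ∈ e) →
      1 ≤ {z : ZMod n | ({u, v, z} : Finset (ZMod n)) ∈ H ∧
            ((CWList n [u, v, z] ∧ GoodFor n H u v z) ∨
             (CWList n [v, u, z] ∧ GoodFor n H v u z))}.ncard ∧
      {z : ZMod n | ({u, v, z} : Finset (ZMod n)) ∈ H ∧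
            ((CWList n [u, v, z] ∧ GoodFor n H u v z) ∨
             (CWList n [v, u, z] ∧ GoodFor n H v u z))}.ncard ≤ 2) := by
  haveI : NeZero n := ⟨by omega⟩
  constructor
  · -- part (1)
    intro a b c hcw he
    rw [cw3_iff] at hcw
    by_cases g1 : GoodFor n H a b c
    · by_cases g2 : GoodFor n H b c a
      · exact Or.inl ⟨g1, g2⟩
      · by_cases g3 : GoodFor n H c a b
        · exact Or.inr (Or.inl ⟨g1, g3⟩)
        · -- Case C : bc bad, ca bad
          exfalso
          rw [GoodFor, not_not] at g2 g3
          obtain ⟨z', hzcw, hzH⟩ := g2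
          obtain ⟨w, hwcw, hwH⟩ := g3
          rw [cw3_iff] at hzcw hwcw
          have hmem : ({c, z', b} : Finset (ZMod n)) = {b, c, z'} := by ext t; simp; tauto
          refine hfree ⟨c, a, w, z', b, ?_, hwH, by rw [hmem]; exact hzH⟩
          rw [cw5_iff]
          have h1 := d_cases a c a
          have h2 := d_cases c a w
          have h3 := d_cases c a b
          have h4 := d_self a
          have b1 := d_lt a c; have b2 := d_lt c a; have b3 := d_lt c w
          have b4 := d_lt c b; have b5 := d_lt a w; have b6 := d_lt a b
          omega
    · rw [GoodFor, not_not] at g1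
      obtain ⟨z', hzcw, hzH⟩ := g1
      rw [cw3_iff] at hzcw
      by_cases g2 : GoodFor n H b c a
      · by_cases g3 : GoodFor n H c a b
        · exact Or.inr (Or.inr ⟨g2, g3⟩)
        · -- Case B : ab bad, ca bad
          exfalso
          rw [GoodFor, not_not] at g3
          obtain ⟨w, hwcw, hwH⟩ := g3
          rw [cw3_iff] at hwcw
          have hmem : ({a, w, c} : Finset (ZMod n)) = {c, a, w} := by ext t; simp; tauto
          refine hfree ⟨a, b, z', w, c, ?_, hzH, by rw [hmem]; exact hwH⟩
          rw [cw5_iff]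
          have h1 := d_cases a b c
          have h2 := d_cases a b z'
          have b1 := d_lt a b; have b2 := d_lt a c; have b3 := d_lt b z'
          have b4 := d_lt b c; have b5 := d_lt a w; have b6 := d_lt a z'
          omega
      · -- Case A : ab bad, bc bad
        exfalso
        rw [GoodFor, not_not] at g2
        obtain ⟨w, hwcw, hwH⟩ := g2
        rw [cw3_iff] at hwcw
        have hmem : ({b, z', a} : Finset (ZMod n)) = {a, b, z'} := by ext t; simp; tauto
        refine hfree ⟨b, c, w, z', a, ?_, hwH, by rw [hmem]; exact hzH⟩
        rw [cw5_iff]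
        have h1 := d_cases a b c
        have h2 := d_cases b c w
        have h3 := d_cases b c a
        have h4 := d_cases a c a
        have h5 := d_self a
        have b1 := d_lt a b; have b2 := d_lt a c; have b3 := d_lt b c
        have b4 := d_lt c w; have b5 := d_lt c a; have b6 := d_lt b w
        have b7 := d_lt b a; have b8 := d_lt b z'
        omega
  · -- part (2)
    intro u v huv hex
    obtain ⟨e, he, hu, hv⟩ := hex
    set S := {z : ZMod n | ({u, v, z} : Finset (ZMod n)) ∈ H ∧
            ((CWList n [u, v, z] ∧ GoodFor n H u v z) ∨
             (CWList n [v, u, z] ∧ GoodFor n H v u z))} with hS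
    have pm : ∀ z : ZMod n, ({u, v, z} : Finset (ZMod n)) = {v, u, z} := by
      intro z; ext t; simp; tauto
    -- find w with {u,v,w} ∈ H
    have hcard := hcgh e he
    have hwex : ∃ w ∈ e, w ∉ ({u, v} : Finset (ZMod n)) := by
      by_contra hcon
      push_neg at hcon
      have hsub : e ⊆ ({u, v} : Finset (ZMod n)) := fun t ht => hcon t ht
      have h1 := Finset.card_le_card hsub
      have h2 := Finset.card_insert_le u ({v} : Finset (ZMod n))
      simp only [Finset.card_singleton] at h2
      omega
    obtain ⟨w, hwe, hwuv⟩ := hwex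
    simp only [Finset.mem_insert, Finset.mem_singleton, not_or] at hwuv
    obtain ⟨hwu, hwv⟩ := hwuv
    have hsub2 : ({u, v, w} : Finset (ZMod n)) ⊆ e := by
      intro t ht
      simp only [Finset.mem_insert, Finset.mem_singleton] at ht
      rcases ht with rfl | rfl | rfl <;> assumption
    have h3 : ({u, v, w} : Finset (ZMod n)).card = 3 :=
      Finset.card_eq_three.mpr ⟨u, v, w, huv, Ne.symm hwu, Ne.symm hwv, rfl⟩
    have heq : ({u, v, w} : Finset (ZMod n)) = e :=
      Finset.eq_of_subset_of_card_le hsub2 (by rw [hcard, h3])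
    have hwH : ({u, v, w} : Finset (ZMod n)) ∈ H := by rw [heq]; exact he
    -- one of the two cyclic orders holds
    have e1 : (v - u).val ≠ 0 := fun h0 => huv ((d_zero_iff u v).mp h0).symm
    have e2 : (u - v).val ≠ 0 := fun h0 => huv ((d_zero_iff v u).mp h0)
    have e3 : (w - u).val ≠ 0 := fun h0 => hwu ((d_zero_iff u w).mp h0)
    have e4 : (w - v).val ≠ 0 := fun h0 => hwv ((d_zero_iff v w).mp h0)
    have e5 : (w - u).val ≠ (v - u).val := fun h => hwv (d_inj h)
    have hc1 := d_cases u v w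
    have hc2 := d_cases u v u
    have hc3 := d_self u
    have b1 := d_lt u v; have b2 := d_lt v u; have b3 := d_lt u w; have b4 := d_lt v w
    have hdir : CWList n [u, v, w] ∨ CWList n [v, u, w] := by
      rw [cw3_iff, cw3_iff]; omega
    have hz₀ : ∃ z₀, z₀ ∈ S := by
      rcases hdir with hd | hd
      · obtain ⟨z₀, hH, hcw, hg⟩ := exists_good hwH hd
        exact ⟨z₀, hH, Or.inl ⟨hcw, hg⟩⟩
      · have hwH' : ({v, u, w} : Finset (ZMod n)) ∈ H := by rw [← pm]; exact hwH
        obtain ⟨z₀, hH, hcw, hg⟩ := exists_good hwH' hd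
        exact ⟨z₀, by rw [hS]; exact ⟨by rw [pm]; exact hH, Or.inr ⟨hcw, hg⟩⟩⟩
    obtain ⟨z₀, hz₀S⟩ := hz₀
    constructor
    · have := (Set.ncard_pos (Set.toFinite S)).mpr ⟨z₀, hz₀S⟩
      omega
    · -- upper bound
      set SL := {z : ZMod n | ({u, v, z} : Finset (ZMod n)) ∈ H ∧
          CWList n [u, v, z] ∧ GoodFor n H u v z} with hSL
      set SR := {z : ZMod n | ({u, v, z} : Finset (ZMod n)) ∈ H ∧
          CWList n [v, u, z] ∧ GoodFor n H v u z} with hSR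
      have hsplit : S ⊆ SL ∪ SR := by
        intro z hz
        rcases hz.2 with h | h
        · exact Or.inl ⟨hz.1, h.1, h.2⟩
        · exact Or.inr ⟨hz.1, h.1, h.2⟩
      have hsubL : SL.Subsingleton := by
        intro z₁ h₁ z₂ h₂
        exact good_unique h₁.1 h₁.2.1 h₁.2.2 h₂.1 h₂.2.1 h₂.2.2
      have hsubR : SR.Subsingleton := by
        intro z₁ h₁ z₂ h₂
        exact good_unique (pm z₁ ▸ h₁.1) h₁.2.1 h₁.2.2 (pm z₂ ▸ h₂.1) h₂.2.1 h₂.2.2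
      have hL : SL.ncard ≤ 1 := by
        rcases hsubL.eq_empty_or_singleton with h | ⟨x, h⟩ <;> simp [h]
      have hR : SR.ncard ≤ 1 := by
        rcases hsubR.eq_empty_or_singleton with h | ⟨x, h⟩ <;> simp [h]
      have h1 : S.ncard ≤ (SL ∪ SR).ncard :=
        Set.ncard_le_ncard hsplit (Set.toFinite _)
      have h2 := Set.ncard_union_le SL SR
      omega
end
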